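/- arXiv:2401.13932 — 2 statements merged into one kernel-verified Lean document; each statement's English description precedes it below -/
import Mathlib

section
/- Let X be any Banach space, 1 < q < ∞, d ≥ 1 and 0 < β, γ ≤ 1. There exist constants c₁, c₂ > 0 depending only on d, γ, β such that for every f ∈ C_c(ℝ^d) ⊗ X and every x ∈ ℝ^d, c₁ G_{q,γ,β}(f)(x) ≤ S_{q,γ,β}(f)(x) ≤ c₂ G_{q,γ,β}(f)(x). -/
open MeasureTheory ENNReal Real Set Metric

noncomputable section

/-- Euclidean space `ℝ^d`. -/
abbrev Euc (d : ℕ) := EuclideanSpace ℝ (Fin d)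

/-- Membership in `C_c(ℝ^d) ⊗ X`: finite linear combinations of products of compactly
supported continuous scalar functions with vectors of `X`. -/
def IsCcTensor (d : ℕ) {X : Type*} [NormedAddCommGroup X] [NormedSpace ℝ X]
    (f : Euc d → X) : Prop :=
  ∃ (n : ℕ) (φ : Fin n → Euc d → ℝ) (v : Fin n → X),
    (∀ i, Continuous (φ i) ∧ HasCompactSupport (φ i)) ∧
    ∀ x, f x = ∑ i, φ i x • v i

/-- Membership in `C_c(ℝ^{d+1}_+) ⊗ X`. -/
def IsCcTensorUp (d : ℕ) {X : Type*} [NormedAddCommGroup X] [NormedSpace ℝ X]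
    (f : Euc d × ℝ → X) : Prop :=
  ∃ (n : ℕ) (φ : Fin n → Euc d × ℝ → ℝ) (v : Fin n → X),
    (∀ i, Continuous (φ i) ∧ HasCompactSupport (φ i) ∧
      tsupport (φ i) ⊆ {p : Euc d × ℝ | 0 < p.2}) ∧
    ∀ p, f p = ∑ i, φ i p • v i

/-- The size, regularity and conservation assumptions on the kernels `K(t,x,y)`
of the semigroup `e^{-tL}`, with constants `c` and parameters `β, γ`. -/
structure KernelEstimates (d : ℕ) (K : ℝ → Euc d → Euc d → ℝ) (c β γ : ℝ) : Prop where
  size : ∀ t > (0:ℝ), ∀ x y : Euc d,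
    |K t x y| ≤ c * t ^ β / (t + dist x y) ^ ((d : ℝ) + β)
  reg : ∀ t > (0:ℝ), ∀ x y h : Euc d, 2 * ‖h‖ ≤ t + dist x y →
    |K t (x + h) y - K t x y| + |K t x (y + h) - K t x y| ≤
      c * ‖h‖ ^ γ * t ^ β / (t + dist x y) ^ ((d : ℝ) + β + γ)
  conserv₁ : ∀ t > (0:ℝ), ∀ y : Euc d, ∫ x, K t x y = 1
  conserv₂ : ∀ t > (0:ℝ), ∀ x : Euc d, ∫ y, K t x y = 1

/-- `K` is the family of integral kernels of the holomorphic semigroup `{e^{-tL}}_{t>0}`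
generated by a sectorial operator `L` of type `α` (`0 ≤ α < π/2`): it satisfies the
semigroup property and extends holomorphically to the sector `|arg z| < π/2 - α`. -/
structure IsSectorialSemigroupKernel (d : ℕ) (α : ℝ) (K : ℝ → Euc d → Euc d → ℝ) : Prop where
  α_nonneg : 0 ≤ α
  α_lt : α < π / 2
  semigroup : ∀ t > (0:ℝ), ∀ s > (0:ℝ), ∀ x y : Euc d,
    K (t + s) x y = ∫ z, K t x z * K s z y
  holo : ∃ Kc : ℂ → Euc d → Euc d → ℂ,
    (∀ t : ℝ, 0 < t → ∀ x y, Kc (t : ℂ) x y = (K t x y : ℂ)) ∧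
    ∀ x y, DifferentiableOn ℂ (fun z => Kc z x y)
      {z : ℂ | z ≠ 0 ∧ |Complex.arg z| < π / 2 - α}

/-- The Poisson kernel, i.e. the kernel of `e^{-t√Δ}`. -/
def poissonKernelEuc (d : ℕ) (t : ℝ) (x y : Euc d) : ℝ :=
  (Real.Gamma (((d : ℝ) + 1) / 2) / π ^ (((d : ℝ) + 1) / 2)) *
    t / (t ^ 2 + dist x y ^ 2) ^ (((d : ℝ) + 1) / 2)

/-- The kernel `k(t,x,y) = t ∂_t K(t,x,y)` of `-tLe^{-tL}`. -/
def tDerivKernel (d : ℕ) (K : ℝ → Euc d → Euc d → ℝ) (t : ℝ) (x y : Euc d) : ℝ :=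
  t * deriv (fun s => K s x y) t

/-- `Q(f)(x,t) = -tLe^{-tL}f(x) = ∫ t ∂_t K(t,x,z) f(z) dz`. -/
def Qop (d : ℕ) {X : Type*} [NormedAddCommGroup X] [NormedSpace ℝ X]
    (K : ℝ → Euc d → Euc d → ℝ) (f : Euc d → X) : Euc d × ℝ → X :=
  fun p => ∫ z, tDerivKernel d K p.2 p.1 z • f z

/-- The conical square (Lusin area) functional `A_q` on `ℝ≥0∞`-valued functions on
`ℝ^{d+1}_+`. -/
def AqE (d : ℕ) (q : ℝ) (u : Euc d × ℝ → ℝ≥0∞) (x : Euc d) : ℝ≥0∞ :=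
  (∫⁻ t in Ioi (0:ℝ),
      (∫⁻ y in ball x t, u (y, t) ^ q) / ENNReal.ofReal (t ^ (d + 1))) ^ (1 / q)

/-- The vertical (g-function) functional on `ℝ≥0∞`-valued functions. -/
def GqE (d : ℕ) (q : ℝ) (u : Euc d × ℝ → ℝ≥0∞) (x : Euc d) : ℝ≥0∞ :=
  (∫⁻ t in Ioi (0:ℝ), u (x, t) ^ q / ENNReal.ofReal t) ^ (1 / q)

/-- The Lusin area functional `A_q(u)(x) = (∫_{Γ(x)} ‖u(y,t)‖^q dy dt/t^{d+1})^{1/q}`. -/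
def Aq (d : ℕ) (q : ℝ) {X : Type*} [NormedAddCommGroup X]
    (u : Euc d × ℝ → X) (x : Euc d) : ℝ≥0∞ :=
  AqE d q (fun p => (‖u p‖₊ : ℝ≥0∞)) x

/-- The g-functional `G_q(u)(x) = (∫₀^∞ ‖u(x,t)‖^q dt/t)^{1/q}`. -/
def Gq (d : ℕ) (q : ℝ) {X : Type*} [NormedAddCommGroup X]
    (u : Euc d × ℝ → X) (x : Euc d) : ℝ≥0∞ :=
  GqE d q (fun p => (‖u p‖₊ : ℝ≥0∞)) x

/-- The tent over the ball `B(z,r)`. -/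
def tentSet (d : ℕ) (z : Euc d) (r : ℝ) : Set (Euc d × ℝ) :=
  {p : Euc d × ℝ | 0 < p.2 ∧ dist p.1 z + p.2 ≤ r}

/-- `∫_{B̂} ‖u(y,t)‖^q dy dt/t` over the tent of `B(z,r)`. -/
def tentIntegral (d : ℕ) (q : ℝ) {X : Type*} [NormedAddCommGroup X]
    (u : Euc d × ℝ → X) (z : Euc d) (r : ℝ) : ℝ≥0∞ :=
  ∫⁻ t in Ioi (0:ℝ),
    (∫⁻ y in {y : Euc d | dist y z + t ≤ r}, (‖u (y, t)‖₊ : ℝ≥0∞) ^ q) / ENNReal.ofReal t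

/-- The Carleson functional `C_q(u)(x) = sup_{B ∋ x} (|B|⁻¹ ∫_{B̂} ‖u‖^q dy dt/t)^{1/q}`. -/
def Cq (d : ℕ) (q : ℝ) {X : Type*} [NormedAddCommGroup X]
    (u : Euc d × ℝ → X) (x : Euc d) : ℝ≥0∞ :=
  ⨆ (z : Euc d) (r : ℝ) (_ : 0 < r) (_ : x ∈ ball z r),
    ((volume (ball z r))⁻¹ * tentIntegral d q u z r) ^ (1 / q)

/-- `L^p(ℝ^d)`-norm (`1 ≤ p < ∞`) of an `ℝ≥0∞`-valued function. -/
def LpN (d : ℕ) (p : ℝ) (g : Euc d → ℝ≥0∞) : ℝ≥0∞ :=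
  (∫⁻ x, g x ^ p) ^ (1 / p)

/-- `L^p(ℝ^d)`-norm, `1 ≤ p ≤ ∞`. -/
def LpNE (d : ℕ) (p : ℝ≥0∞) (g : Euc d → ℝ≥0∞) : ℝ≥0∞ :=
  if p = ∞ then essSup g volume else (∫⁻ x, g x ^ p.toReal) ^ (1 / p.toReal)

/-- The `BMO_{q,L}`-type norm `sup_B (|B|⁻¹ ∫_{B̂} ‖u(y,t)‖^q dy dt/t)^{1/q}`. -/
def bmoQNorm (d : ℕ) (q : ℝ) {X : Type*} [NormedAddCommGroup X]
    (u : Euc d × ℝ → X) : ℝ≥0∞ :=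
  ⨆ (z : Euc d) (r : ℝ) (_ : 0 < r),
    ((volume (ball z r))⁻¹ * tentIntegral d q u z r) ^ (1 / q)

/-- `X` has martingale type `q` with constant `c₀`: every finite `X`-valued
`L^q`-martingale `(f_n)` satisfies `sup_n E‖f_n‖^q ≤ c₀^q (E‖f_0‖^q + Σ E‖f_n - f_{n-1}‖^q)`. -/
def MartingaleTypeWith (X : Type*) [NormedAddCommGroup X] [NormedSpace ℝ X] [CompleteSpace X]
    (q c₀ : ℝ) : Prop :=
  ∀ (Ω : Type) (mΩ : MeasurableSpace Ω) (μ : Measure Ω), IsProbabilityMeasure μ →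
    ∀ (ℱ : Filtration ℕ mΩ) (f : ℕ → Ω → X), Martingale f ℱ μ →
    (∀ n, MemLp (f n) (ENNReal.ofReal q) μ) →
    ∀ N : ℕ, (∀ n, N ≤ n → f n = f N) →
    ∀ n, ∫ ω, ‖f n ω‖ ^ q ∂μ ≤
      c₀ ^ q * ((∫ ω, ‖f 0 ω‖ ^ q ∂μ) +
        ∑ k ∈ Finset.range N, ∫ ω, ‖f (k + 1) ω - f k ω‖ ^ q ∂μ)

/-- `X` is of martingale type `q`. -/
def HasMartingaleType (X : Type*) [NormedAddCommGroup X] [NormedSpace ℝ X] [CompleteSpace X]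
    (q : ℝ) : Prop :=
  ∃ c₀ > 0, MartingaleTypeWith X q c₀

/-- The martingale type `q` constant `M_{t,q}(X)` of `X`. -/
def martingaleTypeConst (X : Type*) [NormedAddCommGroup X] [NormedSpace ℝ X] [CompleteSpace X]
    (q : ℝ) : ℝ :=
  sInf {c₀ : ℝ | 0 ≤ c₀ ∧ MartingaleTypeWith X q c₀}

/-- An `X`-valued atom: supported in a ball `B`, mean zero, and `‖a‖_∞ ≤ |B|⁻¹`. -/
def IsXAtom (d : ℕ) {X : Type*} [NormedAddCommGroup X] [NormedSpace ℝ X]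
    (a : Euc d → X) : Prop :=
  StronglyMeasurable a ∧ ∃ (z : Euc d) (r : ℝ), 0 < r ∧
    (∀ x, x ∉ ball z r → a x = 0) ∧ (∫ x, a x = 0) ∧
    ∀ x, ‖a x‖ ≤ ((volume (ball z r)).toReal)⁻¹

/-- The atomic Hardy space norm `‖f‖_{H¹_at(ℝ^d;X)}`. -/
def atomicH1Norm (d : ℕ) {X : Type*} [NormedAddCommGroup X] [NormedSpace ℝ X]
    (f : Euc d → X) : ℝ≥0∞ :=
  sInf {M : ℝ≥0∞ | ∃ (lam : ℕ → ℝ) (a : ℕ → Euc d → X),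
    (∀ n, IsXAtom d (a n)) ∧
    (∀ᵐ x, HasSum (fun n => lam n • a n x) (f x)) ∧
    M = ∑' n, ENNReal.ofReal |lam n|}

/-- The `BMO(ℝ^d;X)` norm. -/
def bmoNorm (d : ℕ) {X : Type*} [NormedAddCommGroup X] [NormedSpace ℝ X]
    (f : Euc d → X) : ℝ≥0∞ :=
  ⨆ (z : Euc d) (r : ℝ) (_ : 0 < r),
    (volume (ball z r))⁻¹ *
      ∫⁻ x in ball z r, (‖f x - ⨍ y in ball z r, f y‖₊ : ℝ≥0∞)

/-- An `(X,q)`-atom in the tent space. -/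
def IsTentAtom (d : ℕ) (q : ℝ) {X : Type*} [NormedAddCommGroup X]
    (a : Euc d × ℝ → X) : Prop :=
  AEStronglyMeasurable a volume ∧ ∃ (z : Euc d) (r : ℝ), 0 < r ∧
    (∀ p : Euc d × ℝ, p ∉ tentSet d z r → a p = 0) ∧
    (∫⁻ t in Ioi (0:ℝ), (∫⁻ y, (‖a (y, t)‖₊ : ℝ≥0∞) ^ q) / ENNReal.ofReal t) ^ (1 / q) ≤
      (volume (ball z r)) ^ (1 / q - 1)

/-- The operator `π_L(f)(x) = ∫₀^∞ Q(f(·,t))(x,t) dt/t`. -/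
def piL (d : ℕ) {X : Type*} [NormedAddCommGroup X] [NormedSpace ℝ X]
    (K : ℝ → Euc d → Euc d → ℝ) (f : Euc d × ℝ → X) : Euc d → X :=
  fun x => ∫ w in {w : Euc d × ℝ | 0 < w.2}, (tDerivKernel d K w.2 x w.1 / w.2) • f w

/-- The operator `𝒦(f)(x,t) = ∫_{ℝ^{d+1}_+} 𝒦_{t,s}(x,y) f(y,s) dy ds/s`. -/
def tentKernelOp (d : ℕ) {X : Type*} [NormedAddCommGroup X] [NormedSpace ℝ X]
    (𝒦 : ℝ → ℝ → Euc d → Euc d → ℝ) (f : Euc d × ℝ → X) : Euc d × ℝ → X :=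
  fun p => ∫ w in {w : Euc d × ℝ | 0 < w.2}, (𝒦 p.2 w.2 p.1 w.1 / w.2) • f w

/-- Membership in Wilson's family `H_{γ,β}`. -/
def MemHol (d : ℕ) (γ β : ℝ) (φ : Euc d → Euc d → ℝ) : Prop :=
  (∀ x y : Euc d, |φ x y| ≤ (1 + dist x y) ^ (-((d : ℝ) + β))) ∧
  (∀ x y h : Euc d, 2 * ‖h‖ ≤ 1 + dist x y →
    |φ (x + h) y - φ x y| + |φ x (y + h) - φ x y| ≤
      ‖h‖ ^ γ * (1 + dist x y) ^ (-((d : ℝ) + β + γ))) ∧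
  (∀ y : Euc d, ∫ x, φ x y = 0) ∧ (∀ x : Euc d, ∫ y, φ x y = 0)

/-- Wilson's intrinsic functional
`A_{γ,β}(f)(x,t) = sup_{φ ∈ H_{γ,β}} ‖∫ φ_t(x,y) f(y) dy‖`. -/
def intrinsicA (d : ℕ) (γ β : ℝ) {X : Type*} [NormedAddCommGroup X] [NormedSpace ℝ X]
    (f : Euc d → X) (p : Euc d × ℝ) : ℝ≥0∞ :=
  ⨆ (φ : {φ : Euc d → Euc d → ℝ // MemHol d γ β φ}),
    (‖∫ y, ((p.2 ^ d)⁻¹ * φ.1 (p.2⁻¹ • p.1) (p.2⁻¹ • y)) • f y‖₊ : ℝ≥0∞)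

universe u

def shiftC (d : ℕ) : ℝ := 2 ^ (2*d+7)

lemma shiftC_pos (d : ℕ) : 0 < shiftC d := by unfold shiftC; positivity

lemma aux_rpow (a b m s : ℝ) (ha : 0 < a) (hb : 0 < b) (hm : 1 ≤ m) (hs : 0 ≤ s)
    (hab : a ≤ m * b) : b ^ (-s) ≤ m ^ s * a ^ (-s) := by
  have hm0 : (0:ℝ) < m := lt_of_lt_of_le one_pos hm
  have h1 : a ^ s ≤ m ^ s * b ^ s := by
    rw [← Real.mul_rpow hm0.le hb.le]
    exact Real.rpow_le_rpow ha.le hab hs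
  have hbs : 0 < b ^ s := Real.rpow_pos_of_pos hb s
  have has : 0 < a ^ s := Real.rpow_pos_of_pos ha s
  rw [Real.rpow_neg hb.le, Real.rpow_neg ha.le, inv_eq_one_div, ← div_eq_mul_inv,
    div_le_div_iff₀ hbs has]
  linarith

set_option maxHeartbeats 2000000 in
lemma memHol_shift (d : ℕ) (γ β : ℝ) (hβ0 : 0 < β) (hβ1 : β ≤ 1) (hγ0 : 0 < γ) (hγ1 : γ ≤ 1)
    (φ : Euc d → Euc d → ℝ) (hφ : MemHol d γ β φ) (h : Euc d) (hh : ‖h‖ ≤ 1) :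
    MemHol d γ β (fun u v => (shiftC d)⁻¹ * φ (u + h) v) := by
  obtain ⟨hsize, hreg, hm1, hm2⟩ := hφ
  have hc : (0:ℝ) < shiftC d := shiftC_pos d
  refine ⟨?_, ?_, ?_, ?_⟩
  · -- size
    intro u v
    have h2 : 1 + dist u v ≤ 2 * (1 + dist (u + h) v) := by
      have ht : dist u v ≤ ‖h‖ + dist (u + h) v := by
        calc dist u v ≤ dist u (u + h) + dist (u + h) v := dist_triangle _ _ _
          _ = ‖h‖ + dist (u + h) v := by rw [dist_self_add_right]
      have := dist_nonneg (x := u + h) (y := v)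
      linarith
    have h1 : (1 + dist (u + h) v) ^ (-((d:ℝ) + β)) ≤
        2 ^ ((d:ℝ) + β) * (1 + dist u v) ^ (-((d:ℝ) + β)) := by
      apply aux_rpow _ _ 2 _ (by positivity) (by positivity) one_le_two (by positivity) h2
    have hcb : (2:ℝ) ^ ((d:ℝ) + β) ≤ shiftC d := by
      have : (2:ℝ) ^ ((d:ℝ) + β) ≤ 2 ^ (((2*d+7 : ℕ)):ℝ) := by
        apply Real.rpow_le_rpow_of_exponent_le one_le_two
        push_cast; linarith
      rwa [Real.rpow_natCast] at this
    have hZ : (0:ℝ) ≤ (1 + dist u v) ^ (-((d:ℝ) + β)) := by positivity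
    calc |(shiftC d)⁻¹ * φ (u + h) v| = (shiftC d)⁻¹ * |φ (u + h) v| := by
          rw [abs_mul, abs_inv, abs_of_pos hc]
      _ ≤ (shiftC d)⁻¹ * ((1 + dist (u + h) v) ^ (-((d:ℝ) + β))) := by
          apply mul_le_mul_of_nonneg_left (hsize _ _) (by positivity)
      _ ≤ (shiftC d)⁻¹ * (2 ^ ((d:ℝ) + β) * (1 + dist u v) ^ (-((d:ℝ) + β))) := by
          apply mul_le_mul_of_nonneg_left h1 (by positivity)
      _ = ((2:ℝ) ^ ((d:ℝ) + β) / shiftC d) * (1 + dist u v) ^ (-((d:ℝ) + β)) := by ring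
      _ ≤ 1 * (1 + dist u v) ^ (-((d:ℝ) + β)) := by
          apply mul_le_mul_of_nonneg_right (div_le_one_of_le₀ hcb hc.le) hZ
      _ = _ := one_mul _
  · -- regularity
    intro u v k hk
    set D := dist u v with hD
    have hD0 : 0 ≤ D := dist_nonneg
    set s : ℝ := (d:ℝ) + β + γ with hs
    have hs0 : 0 ≤ s := by positivity
    set k4 : Euc d := (4:ℝ)⁻¹ • k with hk4def
    have hk4 : ‖k4‖ = ‖k‖ / 4 := by
      rw [hk4def, norm_smul, Real.norm_eq_abs]
      rw [abs_of_pos (by norm_num : (0:ℝ) < (4:ℝ)⁻¹)]; ring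
    have hknn : 0 ≤ ‖k‖ := norm_nonneg k
    have key : ∀ Y : ℝ, 0 ≤ Y → D - 1 - (3/4) * ‖k‖ ≤ Y →
        (1 + D ≤ 4 * (1 + Y) ∧ 2 * ‖k4‖ ≤ 1 + Y) := by
      intro Y hY0 hY
      have h1 : 1 + D ≤ 4 * (1 + Y) := by
        rcases le_or_gt D 3 with hD3 | hD3
        · linarith
        · linarith
      refine ⟨h1, ?_⟩
      rw [hk4]; linarith
    -- step bound, x-side
    have step1 : ∀ w : Euc d, ‖w‖ ≤ 1 + (3/4) * ‖k‖ →
        |φ (u + w + k4) v - φ (u + w) v| ≤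
          ‖k4‖ ^ γ * (4 ^ s * (1 + D) ^ (-s)) := by
      intro w hw
      have hdw : D - 1 - (3/4) * ‖k‖ ≤ dist (u + w) v := by
        have : D ≤ ‖w‖ + dist (u + w) v := by
          calc D ≤ dist u (u + w) + dist (u + w) v := dist_triangle _ _ _
            _ = ‖w‖ + dist (u + w) v := by rw [dist_self_add_right]
        linarith
      obtain ⟨hk1, hk2⟩ := key (dist (u + w) v) dist_nonneg hdw
      have hr := hreg (u + w) v k4 (by linarith)
      have hb : (1 + dist (u + w) v) ^ (-s) ≤ 4 ^ s * (1 + D) ^ (-s) :=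
        aux_rpow _ _ 4 _ (by positivity) (by positivity) (by norm_num) hs0 (by linarith)
      have habs : 0 ≤ |φ (u + w) (v + k4) - φ (u + w) v| := abs_nonneg _
      calc |φ (u + w + k4) v - φ (u + w) v|
          ≤ ‖k4‖ ^ γ * (1 + dist (u + w) v) ^ (-s) := by
            have := hr; linarith
        _ ≤ ‖k4‖ ^ γ * (4 ^ s * (1 + D) ^ (-s)) := by
            apply mul_le_mul_of_nonneg_left hb (by positivity)
    -- step bound, y-side
    have step2 : ∀ w : Euc d, ‖w‖ ≤ (3/4) * ‖k‖ →
        |φ (u + h) (v + w + k4) - φ (u + h) (v + w)| ≤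
          ‖k4‖ ^ γ * (4 ^ s * (1 + D) ^ (-s)) := by
      intro w hw
      have hdw : D - 1 - (3/4) * ‖k‖ ≤ dist (u + h) (v + w) := by
        have : D ≤ ‖h‖ + dist (u + h) (v + w) + ‖w‖ := by
          calc D ≤ dist u (u + h) + dist (u + h) (v + w) + dist (v + w) v :=
                dist_triangle4 _ _ _ _
            _ = ‖h‖ + dist (u + h) (v + w) + ‖w‖ := by
                rw [dist_self_add_right, dist_comm (v + w) v, dist_self_add_right]
        linarith
      obtain ⟨hk1, hk2⟩ := key (dist (u + h) (v + w)) dist_nonneg hdw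
      have hr := hreg (u + h) (v + w) k4 (by linarith)
      have habs : 0 ≤ |φ (u + h + k4) (v + w) - φ (u + h) (v + w)| := abs_nonneg _
      have hb : (1 + dist (u + h) (v + w)) ^ (-s) ≤ 4 ^ s * (1 + D) ^ (-s) :=
        aux_rpow _ _ 4 _ (by positivity) (by positivity) (by norm_num) hs0 (by linarith)
      calc |φ (u + h) (v + w + k4) - φ (u + h) (v + w)|
          ≤ ‖k4‖ ^ γ * (1 + dist (u + h) (v + w)) ^ (-s) := by linarith
        _ ≤ ‖k4‖ ^ γ * (4 ^ s * (1 + D) ^ (-s)) := by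
            apply mul_le_mul_of_nonneg_left hb (by positivity)
    set T : ℝ := ‖k4‖ ^ γ * (4 ^ s * (1 + D) ^ (-s)) with hT
    -- telescoping, x-side
    have hn : ∀ (j : ℝ), 0 ≤ j → j ≤ 3 → ‖h + j • k4‖ ≤ 1 + (3/4) * ‖k‖ := by
      intro j hj0 hj3
      calc ‖h + j • k4‖ ≤ ‖h‖ + ‖j • k4‖ := norm_add_le _ _
        _ = ‖h‖ + j * ‖k4‖ := by rw [norm_smul, Real.norm_eq_abs, abs_of_nonneg hj0]
        _ ≤ 1 + (3/4) * ‖k‖ := by rw [hk4]; nlinarith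
    have telx : |φ (u + k + h) v - φ (u + h) v| ≤ 4 * T := by
      have s0' : |φ (u + (h + (1:ℝ) • k4)) v - φ (u + h) v| ≤ T := by
        have h0 := step1 h (by simpa using hn 0 le_rfl (by norm_num))
        have e0 : u + h + k4 = u + (h + (1:ℝ) • k4) := by module
        rwa [e0] at h0
      have s1' : |φ (u + (h + (2:ℝ) • k4)) v - φ (u + (h + (1:ℝ) • k4)) v| ≤ T := by
        have h0 := step1 (h + (1:ℝ) • k4) (hn 1 zero_le_one (by norm_num))
        have e0 : u + (h + (1:ℝ) • k4) + k4 = u + (h + (2:ℝ) • k4) := by module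
        rwa [e0] at h0
      have s2' : |φ (u + (h + (3:ℝ) • k4)) v - φ (u + (h + (2:ℝ) • k4)) v| ≤ T := by
        have h0 := step1 (h + (2:ℝ) • k4) (hn 2 (by norm_num) (by norm_num))
        have e0 : u + (h + (2:ℝ) • k4) + k4 = u + (h + (3:ℝ) • k4) := by module
        rwa [e0] at h0
      have s3' : |φ (u + k + h) v - φ (u + (h + (3:ℝ) • k4)) v| ≤ T := by
        have h0 := step1 (h + (3:ℝ) • k4) (hn 3 (by norm_num) (by norm_num))
        have e0 : u + (h + (3:ℝ) • k4) + k4 = u + k + h := by rw [hk4def]; module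
        rwa [e0] at h0
      have t1 := abs_sub_le (φ (u + k + h) v) (φ (u + (h + (3:ℝ) • k4)) v) (φ (u + h) v)
      have t2 := abs_sub_le (φ (u + (h + (3:ℝ) • k4)) v) (φ (u + (h + (2:ℝ) • k4)) v)
        (φ (u + h) v)
      have t3 := abs_sub_le (φ (u + (h + (2:ℝ) • k4)) v) (φ (u + (h + (1:ℝ) • k4)) v)
        (φ (u + h) v)
      linarith
    have hm : ∀ (j : ℝ), 0 ≤ j → j ≤ 3 → ‖j • k4‖ ≤ (3/4) * ‖k‖ := by
      intro j hj0 hj3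
      rw [norm_smul, Real.norm_eq_abs, abs_of_nonneg hj0, hk4]; nlinarith
    have tely : |φ (u + h) (v + k) - φ (u + h) v| ≤ 4 * T := by
      have s0' : |φ (u + h) (v + (1:ℝ) • k4) - φ (u + h) v| ≤ T := by
        have h0 := step2 0 (by simpa using hm 0 le_rfl (by norm_num))
        have e0 : v + (0:Euc d) + k4 = v + (1:ℝ) • k4 := by module
        have e1 : v + (0:Euc d) = v := by module
        rwa [e0, e1] at h0
      have s1' : |φ (u + h) (v + (2:ℝ) • k4) - φ (u + h) (v + (1:ℝ) • k4)| ≤ T := by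
        have h0 := step2 ((1:ℝ) • k4) (hm 1 zero_le_one (by norm_num))
        have e0 : v + (1:ℝ) • k4 + k4 = v + (2:ℝ) • k4 := by module
        rwa [e0] at h0
      have s2' : |φ (u + h) (v + (3:ℝ) • k4) - φ (u + h) (v + (2:ℝ) • k4)| ≤ T := by
        have h0 := step2 ((2:ℝ) • k4) (hm 2 (by norm_num) (by norm_num))
        have e0 : v + (2:ℝ) • k4 + k4 = v + (3:ℝ) • k4 := by module
        rwa [e0] at h0
      have s3' : |φ (u + h) (v + k) - φ (u + h) (v + (3:ℝ) • k4)| ≤ T := by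
        have h0 := step2 ((3:ℝ) • k4) (hm 3 (by norm_num) (by norm_num))
        have e0 : v + (3:ℝ) • k4 + k4 = v + k := by rw [hk4def]; module
        rwa [e0] at h0
      have t1 := abs_sub_le (φ (u + h) (v + k)) (φ (u + h) (v + (3:ℝ) • k4)) (φ (u + h) v)
      have t2 := abs_sub_le (φ (u + h) (v + (3:ℝ) • k4)) (φ (u + h) (v + (2:ℝ) • k4))
        (φ (u + h) v)
      have t3 := abs_sub_le (φ (u + h) (v + (2:ℝ) • k4)) (φ (u + h) (v + (1:ℝ) • k4))
        (φ (u + h) v)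
      linarith
    have hTk : T ≤ ‖k‖ ^ γ * (4 ^ s * (1 + D) ^ (-s)) := by
      apply mul_le_mul_of_nonneg_right _ (by positivity)
      exact Real.rpow_le_rpow (norm_nonneg k4) (by rw [hk4]; linarith) hγ0.le
    have h84 : 8 * (4:ℝ) ^ s ≤ shiftC d := by
      have h1 : (4:ℝ) ^ s ≤ (4:ℝ) ^ (((d + 2 : ℕ)):ℝ) := by
        apply Real.rpow_le_rpow_of_exponent_le (by norm_num)
        push_cast; rw [hs]; push_cast; linarith
      rw [Real.rpow_natCast] at h1
      have h3 : (8:ℝ) * 4 ^ (d + 2) = shiftC d := by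
        unfold shiftC
        rw [show (4:ℝ) = 2^2 by norm_num, ← pow_mul, show (8:ℝ) = 2^3 by norm_num,
          ← pow_add]
        congr 1; ring
      nlinarith [pow_pos (by norm_num : (0:ℝ) < 4) (d+2)]
    have hZ : (0:ℝ) ≤ ‖k‖ ^ γ * (1 + D) ^ (-s) := by positivity
    calc |(fun u v => (shiftC d)⁻¹ * φ (u + h) v) (u + k) v -
            (fun u v => (shiftC d)⁻¹ * φ (u + h) v) u v| +
          |(fun u v => (shiftC d)⁻¹ * φ (u + h) v) u (v + k) -
            (fun u v => (shiftC d)⁻¹ * φ (u + h) v) u v|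
        = (shiftC d)⁻¹ * (|φ (u + k + h) v - φ (u + h) v| +
            |φ (u + h) (v + k) - φ (u + h) v|) := by
          simp only [← mul_sub, abs_mul, abs_inv, abs_of_pos hc]; ring
      _ ≤ (shiftC d)⁻¹ * (8 * T) := by
          apply mul_le_mul_of_nonneg_left (by linarith) (by positivity)
      _ ≤ (shiftC d)⁻¹ * (8 * (‖k‖ ^ γ * (4 ^ s * (1 + D) ^ (-s)))) := by
          apply mul_le_mul_of_nonneg_left (by linarith) (by positivity)
      _ = (8 * 4 ^ s / shiftC d) * (‖k‖ ^ γ * (1 + D) ^ (-s)) := by ring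
      _ ≤ 1 * (‖k‖ ^ γ * (1 + D) ^ (-s)) := by
          apply mul_le_mul_of_nonneg_right (div_le_one_of_le₀ h84 hc.le) hZ
      _ = ‖k‖ ^ γ * (1 + D) ^ (-s) := one_mul _
  · intro v
    simp only [MeasureTheory.integral_const_mul]
    rw [integral_add_right_eq_self (fun z => φ z v) h, hm1 v, mul_zero]
  · intro u
    simp only [MeasureTheory.integral_const_mul]
    rw [hm2 (u + h), mul_zero]

set_option maxHeartbeats 1000000 in
lemma intrinsicA_compare (d : ℕ) (γ β : ℝ) (hβ0 : 0 < β) (hβ1 : β ≤ 1) (hγ0 : 0 < γ)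
    (hγ1 : γ ≤ 1) {X : Type*} [NormedAddCommGroup X] [NormedSpace ℝ X]
    (f : Euc d → X) (x y : Euc d) (t : ℝ) (ht : 0 < t) (hxy : dist x y ≤ t) :
    intrinsicA d γ β f (x, t) ≤ ENNReal.ofReal (shiftC d) * intrinsicA d γ β f (y, t) := by
  have hc : (0:ℝ) < shiftC d := shiftC_pos d
  rw [intrinsicA]
  apply iSup_le
  rintro ⟨φ, hφ⟩
  set h : Euc d := t⁻¹ • x - t⁻¹ • y with hhdef
  have hh : ‖h‖ ≤ 1 := by
    have e : h = t⁻¹ • (x - y) := by rw [hhdef, smul_sub]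
    rw [e, norm_smul, Real.norm_eq_abs, abs_of_pos (inv_pos.mpr ht), ← dist_eq_norm,
      ← div_eq_inv_mul]
    exact div_le_one_of_le₀ hxy ht.le
  set ψ : Euc d → Euc d → ℝ := fun u v => (shiftC d)⁻¹ * φ (u + h) v with hψdef
  have hψ : MemHol d γ β ψ := memHol_shift d γ β hβ0 hβ1 hγ0 hγ1 φ hφ h hh
  have hyx : t⁻¹ • y + h = t⁻¹ • x := by rw [hhdef]; abel
  have hpt : ∀ z : Euc d, (((t:ℝ) ^ d)⁻¹ * ψ (t⁻¹ • y) (t⁻¹ • z)) • f z =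
      (shiftC d)⁻¹ • ((((t:ℝ) ^ d)⁻¹ * φ (t⁻¹ • x) (t⁻¹ • z)) • f z) := by
    intro z
    rw [hψdef]
    simp only [hyx]
    rw [smul_smul]
    ring_nf
  have hI : (∫ z, (((t:ℝ) ^ d)⁻¹ * ψ (t⁻¹ • y) (t⁻¹ • z)) • f z) =
      (shiftC d)⁻¹ • ∫ z, (((t:ℝ) ^ d)⁻¹ * φ (t⁻¹ • x) (t⁻¹ • z)) • f z := by
    simp_rw [hpt]
    exact integral_smul _ _
  have heq : (‖∫ z, (((t:ℝ) ^ d)⁻¹ * φ (t⁻¹ • x) (t⁻¹ • z)) • f z‖₊ : ℝ≥0∞) =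
      ENNReal.ofReal (shiftC d) *
        (‖∫ z, (((t:ℝ) ^ d)⁻¹ * ψ (t⁻¹ • y) (t⁻¹ • z)) • f z‖₊ : ℝ≥0∞) := by
    rw [← enorm_eq_nnnorm, ← enorm_eq_nnnorm, ← ofReal_norm, ← ofReal_norm, hI, norm_smul,
      Real.norm_eq_abs, abs_inv, abs_of_pos hc, ← ENNReal.ofReal_mul hc.le,
      ← mul_assoc, mul_inv_cancel₀ hc.ne', one_mul]
  calc (‖∫ z, (((t:ℝ) ^ d)⁻¹ * φ (t⁻¹ • x) (t⁻¹ • z)) • f z‖₊ : ℝ≥0∞)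
      = ENNReal.ofReal (shiftC d) *
        (‖∫ z, (((t:ℝ) ^ d)⁻¹ * ψ (t⁻¹ • y) (t⁻¹ • z)) • f z‖₊ : ℝ≥0∞) := heq
    _ ≤ ENNReal.ofReal (shiftC d) * intrinsicA d γ β f (y, t) := by
        apply mul_le_mul_right
        rw [intrinsicA]
        exact le_iSup (fun (φ' : {φ : Euc d → Euc d → ℝ // MemHol d γ β φ}) =>
          (‖∫ z, (((t:ℝ) ^ d)⁻¹ * φ'.1 (t⁻¹ • y) (t⁻¹ • z)) • f z‖₊ : ℝ≥0∞)) ⟨ψ, hψ⟩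


set_option maxHeartbeats 2000000 in
/-- Pointwise equivalence of the intrinsic area function
`S_{q,γ,β}` and the intrinsic `g`-function `G_{q,γ,β}`, with constants depending
only on `d, γ, β`. -/
theorem intrinsic_area_vs_g_pointwise :
    ∀ d : ℕ, 1 ≤ d →
    ∀ β γ : ℝ, 0 < β → β ≤ 1 → 0 < γ → γ ≤ 1 →
    ∃ c₁ c₂ : ℝ, 0 < c₁ ∧ 0 < c₂ ∧
      ∀ (X : Type u) [NormedAddCommGroup X] [NormedSpace ℝ X] [CompleteSpace X],
      ∀ q : ℝ, 1 < q →
      ∀ f : Euc d → X, IsCcTensor d f →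
      ∀ x : Euc d,
        ENNReal.ofReal c₁ * GqE d q (intrinsicA d γ β f) x ≤
          AqE d q (intrinsicA d γ β f) x ∧
        AqE d q (intrinsicA d γ β f) x ≤
          ENNReal.ofReal c₂ * GqE d q (intrinsicA d γ β f) x := by
  intro d hd β γ hβ0 hβ1 hγ0 hγ1
  haveI : Nonempty (Fin d) := ⟨⟨0, hd⟩⟩
  have hc : (0:ℝ) < shiftC d := shiftC_pos d
  set V : ℝ≥0∞ := volume (ball (0:Euc d) 1) with hV
  have hVpos : 0 < V := measure_ball_pos _ _ one_pos
  have hVtop : V ≠ ⊤ := measure_ball_lt_top.ne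
  set Vr : ℝ := V.toReal with hVr
  have hVrpos : 0 < Vr := ENNReal.toReal_pos hVpos.ne' hVtop
  have hVVr : ENNReal.ofReal Vr = V := ENNReal.ofReal_toReal hVtop
  refine ⟨(shiftC d)⁻¹ * min Vr 1, shiftC d * max Vr 1,
    mul_pos (inv_pos.mpr hc) (lt_min hVrpos one_pos),
    mul_pos hc (lt_of_lt_of_le one_pos (le_max_right _ _)), ?_⟩
  intro X _ _ _ q hq f _ x
  have hq0 : (0:ℝ) < q := lt_trans one_pos hq
  have hqinv : (0:ℝ) ≤ 1 / q := by positivity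
  set u : Euc d × ℝ → ℝ≥0∞ := intrinsicA d γ β f with hu
  set C : ℝ≥0∞ := ENNReal.ofReal (shiftC d) with hC
  have hC0 : C ≠ 0 := (ENNReal.ofReal_pos.mpr hc).ne'
  have hCt : C ≠ ⊤ := ENNReal.ofReal_ne_top
  have hcomp : ∀ t : ℝ, 0 < t → ∀ y ∈ ball x t,
      u (x, t) ≤ C * u (y, t) ∧ u (y, t) ≤ C * u (x, t) := by
    intro t ht y hy
    have h1 : dist x y ≤ t := le_of_lt (by rwa [dist_comm, ← mem_ball])
    have h2 : dist y x ≤ t := le_of_lt (by rwa [← mem_ball])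
    exact ⟨intrinsicA_compare d γ β hβ0 hβ1 hγ0 hγ1 f x y t ht h1,
      intrinsicA_compare d γ β hβ0 hβ1 hγ0 hγ1 f y x t ht h2⟩
  set IG : ℝ≥0∞ := ∫⁻ t in Ioi (0:ℝ), u (x, t) ^ q / ENNReal.ofReal t with hIG
  set IA : ℝ≥0∞ := ∫⁻ t in Ioi (0:ℝ),
      (∫⁻ y in ball x t, u (y, t) ^ q) / ENNReal.ofReal (t ^ (d + 1)) with hIA
  have hvol : ∀ t : ℝ, 0 < t →
      volume (ball x t) = ENNReal.ofReal (t ^ d) * V := by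
    intro t ht
    rw [hV, Measure.addHaar_ball volume x ht.le, finrank_euclideanSpace_fin]
  have hden : ∀ t : ℝ, 0 < t →
      ENNReal.ofReal (t ^ (d + 1)) = ENNReal.ofReal (t ^ d) * ENNReal.ofReal t := by
    intro t ht
    rw [pow_succ, ENNReal.ofReal_mul (by positivity)]
  constructor
  · -- direction 1
    set c₁ : ℝ := (shiftC d)⁻¹ * min Vr 1 with hc₁
    have hminq : ENNReal.ofReal (min Vr 1) ^ q ≤ V := by
      have h1 : ENNReal.ofReal (min Vr 1) ≤ 1 := by
        rw [← ENNReal.ofReal_one]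
        exact ENNReal.ofReal_le_ofReal (min_le_right _ _)
      calc ENNReal.ofReal (min Vr 1) ^ q ≤ ENNReal.ofReal (min Vr 1) ^ (1:ℝ) :=
            ENNReal.rpow_le_rpow_of_exponent_ge h1 (le_of_lt hq)
        _ = ENNReal.ofReal (min Vr 1) := ENNReal.rpow_one _
        _ ≤ ENNReal.ofReal Vr := ENNReal.ofReal_le_ofReal (min_le_left _ _)
        _ = V := hVVr
    have hcon : ENNReal.ofReal c₁ ^ q ≤ C⁻¹ ^ q * V := by
      rw [hc₁, ENNReal.ofReal_mul (by positivity), ENNReal.ofReal_inv_of_pos hc, ← hC,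
        ENNReal.mul_rpow_of_nonneg _ _ hq0.le]
      exact mul_le_mul_right hminq _
    have key1 : ENNReal.ofReal c₁ ^ q * IG ≤ IA := by
      rw [hIG, hIA, ← lintegral_const_mul' _ _
        (ENNReal.rpow_ne_top_of_nonneg hq0.le ENNReal.ofReal_ne_top)]
      apply lintegral_mono_ae
      rw [ae_restrict_iff' measurableSet_Ioi]
      apply ae_of_all
      intro t ht
      replace ht : (0:ℝ) < t := ht
      set J : ℝ≥0∞ := ENNReal.ofReal (t ^ d) with hJ
      have hJ0 : J ≠ 0 := (ENNReal.ofReal_pos.mpr (by positivity)).ne'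
      have hJt : J ≠ ⊤ := ENNReal.ofReal_ne_top
      have hlow : (C⁻¹ * u (x, t)) ^ q * (J * V) ≤ ∫⁻ y in ball x t, u (y, t) ^ q := by
        rw [← hvol t ht, ← setLIntegral_const]
        apply lintegral_mono_ae
        rw [ae_restrict_iff' measurableSet_ball]
        apply ae_of_all
        intro y hy
        apply ENNReal.rpow_le_rpow _ hq0.le
        calc C⁻¹ * u (x, t) ≤ C⁻¹ * (C * u (y, t)) :=
              mul_le_mul_right (hcomp t ht y hy).1 _
          _ = u (y, t) := by rw [← mul_assoc, ENNReal.inv_mul_cancel hC0 hCt, one_mul]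
      calc ENNReal.ofReal c₁ ^ q * (u (x, t) ^ q / ENNReal.ofReal t)
          = ENNReal.ofReal c₁ ^ q * u (x, t) ^ q / ENNReal.ofReal t := by
            rw [mul_div_assoc]
        _ ≤ (C⁻¹ * u (x, t)) ^ q * (J * V) / (J * ENNReal.ofReal t) := by
            rw [mul_left_comm, ENNReal.mul_div_mul_left _ _ hJ0 hJt]
            apply ENNReal.div_le_div_right
            rw [ENNReal.mul_rpow_of_nonneg _ _ hq0.le, mul_right_comm]
            exact mul_le_mul_left hcon _
        _ ≤ (∫⁻ y in ball x t, u (y, t) ^ q) / ENNReal.ofReal (t ^ (d + 1)) := by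
            rw [hden t ht]
            exact ENNReal.div_le_div_right hlow _
    have hrr : (ENNReal.ofReal c₁ ^ q) ^ (1 / q) = ENNReal.ofReal c₁ := by
      rw [← ENNReal.rpow_mul, mul_one_div_cancel hq0.ne', ENNReal.rpow_one]
    show ENNReal.ofReal c₁ * GqE d q u x ≤ AqE d q u x
    rw [GqE, AqE, ← hIG, ← hIA]
    calc ENNReal.ofReal c₁ * IG ^ (1 / q)
        = (ENNReal.ofReal c₁ ^ q * IG) ^ (1 / q) := by
          rw [ENNReal.mul_rpow_of_nonneg _ _ hqinv, hrr]
      _ ≤ IA ^ (1 / q) := ENNReal.rpow_le_rpow key1 hqinv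
  · -- direction 2
    set c₂ : ℝ := shiftC d * max Vr 1 with hc₂
    have key2 : IA ≤ C ^ q * V * IG := by
      rw [hIG, hIA, ← lintegral_const_mul' _ _
        (ENNReal.mul_ne_top (ENNReal.rpow_ne_top_of_nonneg hq0.le hCt) hVtop)]
      apply lintegral_mono_ae
      rw [ae_restrict_iff' measurableSet_Ioi]
      apply ae_of_all
      intro t ht
      replace ht : (0:ℝ) < t := ht
      set J : ℝ≥0∞ := ENNReal.ofReal (t ^ d) with hJ
      have hJ0 : J ≠ 0 := (ENNReal.ofReal_pos.mpr (by positivity)).ne'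
      have hJt : J ≠ ⊤ := ENNReal.ofReal_ne_top
      have hhigh : (∫⁻ y in ball x t, u (y, t) ^ q) ≤ (C * u (x, t)) ^ q * (J * V) := by
        rw [← hvol t ht, ← setLIntegral_const]
        apply lintegral_mono_ae
        rw [ae_restrict_iff' measurableSet_ball]
        apply ae_of_all
        intro y hy
        exact ENNReal.rpow_le_rpow (hcomp t ht y hy).2 hq0.le
      calc (∫⁻ y in ball x t, u (y, t) ^ q) / ENNReal.ofReal (t ^ (d + 1))
          ≤ (C * u (x, t)) ^ q * (J * V) / (J * ENNReal.ofReal t) := by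
            rw [hden t ht]
            exact ENNReal.div_le_div_right hhigh _
        _ = (C * u (x, t)) ^ q * V / ENNReal.ofReal t := by
            rw [mul_left_comm, ENNReal.mul_div_mul_left _ _ hJ0 hJt]
        _ = C ^ q * V * (u (x, t) ^ q / ENNReal.ofReal t) := by
            rw [ENNReal.mul_rpow_of_nonneg _ _ hq0.le, mul_right_comm, mul_div_assoc]
    have hmaxq : V ^ (1 / q) ≤ ENNReal.ofReal (max Vr 1) := by
      have hmax1 : (1:ℝ≥0∞) ≤ ENNReal.ofReal (max Vr 1) := by
        rw [← ENNReal.ofReal_one]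
        exact ENNReal.ofReal_le_ofReal (le_max_right _ _)
      rcases le_total V 1 with hV1 | hV1
      · calc V ^ (1 / q) ≤ (1:ℝ≥0∞) ^ (1 / q) := ENNReal.rpow_le_rpow hV1 hqinv
          _ = 1 := ENNReal.one_rpow _
          _ ≤ _ := hmax1
      · calc V ^ (1 / q) ≤ V ^ (1:ℝ) :=
            ENNReal.rpow_le_rpow_of_exponent_le hV1
              ((div_le_one hq0).mpr (le_of_lt hq))
          _ = V := ENNReal.rpow_one _
          _ = ENNReal.ofReal Vr := hVVr.symm
          _ ≤ _ := ENNReal.ofReal_le_ofReal (le_max_left _ _)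
    have hCq : (C ^ q) ^ (1 / q) = C := by
      rw [← ENNReal.rpow_mul, mul_one_div_cancel hq0.ne', ENNReal.rpow_one]
    show AqE d q u x ≤ ENNReal.ofReal c₂ * GqE d q u x
    rw [GqE, AqE, ← hIG, ← hIA]
    calc IA ^ (1 / q) ≤ (C ^ q * V * IG) ^ (1 / q) := ENNReal.rpow_le_rpow key2 hqinv
      _ = (C ^ q) ^ (1 / q) * V ^ (1 / q) * IG ^ (1 / q) := by
          rw [ENNReal.mul_rpow_of_nonneg _ _ hqinv, ENNReal.mul_rpow_of_nonneg _ _ hqinv]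
      _ = C * V ^ (1 / q) * IG ^ (1 / q) := by rw [hCq]
      _ ≤ C * ENNReal.ofReal (max Vr 1) * IG ^ (1 / q) :=
          mul_le_mul_left (mul_le_mul_right hmaxq _) _
      _ = ENNReal.ofReal c₂ * IG ^ (1 / q) := by
          rw [hc₂, ENNReal.ofReal_mul hc.le, hC]
end
end

section
/- Let d ≥ 1 and 0 < β, γ ≤ 1, and let k(t,x,y) be a kernel such that C_k^{−1}(k(t,·,·))_{t^{−1}} ∈ H_{γ,β} for some constant C_k > 0 and all t > 0, and such that ∫_{ℝ^d} k(s,z,w)dz = 0 for all s > 0 and w ∈ ℝ^d. For θ ∈ H_{γ,β} define Λ^θ_{t,s}(y,w) = ∫_{ℝ^d} θ_t(y,z) k(s,z,w) dz. Set ν = min{γ,β}/2 and ζ = (d + β/2)/(d + β). Then sup_{θ ∈ H_{γ,β}} |Λ^θ_{t,s}(y,w)| ≤ C · min{s/t, t/s}^{(1−ζ)ν} · min{1/t, 1/s}^d / (1 + min{1/t, 1/s}|y−w|)^{d + β/2} for all t,s > 0 and y,w ∈ ℝ^d, where C > 0 depends only on d, γ, β and C_k. -/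
open MeasureTheory ENNReal Real Set Metric

noncomputable section

namespace ThetaKAux

/-- The basic profile integral constant. -/
noncomputable def cI (d : ℕ) (α : ℝ) : ℝ := ∫ v : Euc d, (1 + ‖v‖) ^ (-α)

lemma cI_nonneg (d : ℕ) (α : ℝ) : 0 ≤ cI d α :=
  integral_nonneg fun v => Real.rpow_nonneg (by positivity) _

lemma cont_bump {d : ℕ} (τ α : ℝ) (hτ : 0 < τ) (p : Euc d) :
    Continuous fun z : Euc d => (τ + dist z p) ^ (-α) := by
  apply Continuous.rpow_const (continuous_const.add (continuous_id.dist continuous_const))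
  intro z
  exact Or.inl (ne_of_gt (add_pos_of_pos_of_nonneg hτ dist_nonneg))

lemma integrable_bump {d : ℕ} {α : ℝ} (hα : (d : ℝ) < α) {τ : ℝ} (hτ : 0 < τ) (p : Euc d) :
    Integrable fun z : Euc d => (τ + dist z p) ^ (-α) := by
  have hα0 : 0 ≤ α := le_trans (Nat.cast_nonneg d) hα.le
  have hbase : Integrable fun z : Euc d => (1 + ‖z‖) ^ (-α) := by
    apply integrable_one_add_norm (E := Euc d)
    simpa [finrank_euclideanSpace] using hα
  have htrans : Integrable fun z : Euc d => (1 + ‖z - p‖) ^ (-α) := hbase.comp_sub_right p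
  have hmin : 0 < min τ 1 := lt_min hτ one_pos
  refine (htrans.const_mul ((min τ 1) ^ (-α))).mono'
    ((cont_bump τ α hτ p).aestronglyMeasurable) ?_
  filter_upwards with z
  rw [Real.norm_eq_abs, abs_of_nonneg (Real.rpow_nonneg (by positivity) _)]
  have hle : min τ 1 * (1 + ‖z - p‖) ≤ τ + dist z p := by
    rw [dist_eq_norm]
    have h1 : min τ 1 ≤ τ := min_le_left _ _
    have h2 : min τ 1 ≤ 1 := min_le_right _ _
    nlinarith [norm_nonneg (z - p)]
  calc (τ + dist z p) ^ (-α)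
      ≤ (min τ 1 * (1 + ‖z - p‖)) ^ (-α) :=
        Real.rpow_le_rpow_of_nonpos (by positivity) hle (neg_nonpos.2 hα0)
    _ = (min τ 1) ^ (-α) * (1 + ‖z - p‖) ^ (-α) :=
        Real.mul_rpow hmin.le (by positivity)

lemma integral_bump {d : ℕ} {α : ℝ} (hα : (d : ℝ) < α) {τ : ℝ} (hτ : 0 < τ) (p : Euc d) :
    ∫ z : Euc d, (τ + dist z p) ^ (-α) = τ ^ ((d : ℝ) - α) * cI d α := by
  have h1 : ∫ z : Euc d, (τ + dist z p) ^ (-α) = ∫ z : Euc d, (τ + ‖z‖) ^ (-α) := by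
    simp_rw [dist_eq_norm]
    exact integral_sub_right_eq_self (fun z : Euc d => (τ + ‖z‖) ^ (-α)) p
  have h2 := MeasureTheory.Measure.integral_comp_smul_of_nonneg (volume : Measure (Euc d))
      (fun z : Euc d => (τ + ‖z‖) ^ (-α)) τ (hR := hτ.le)
  have hfr : Module.finrank ℝ (Euc d) = d := by simp [finrank_euclideanSpace]
  have h3 : ∀ x : Euc d, (τ + ‖τ • x‖) ^ (-α) = τ ^ (-α) * (1 + ‖x‖) ^ (-α) := by
    intro x
    rw [norm_smul, Real.norm_eq_abs, abs_of_pos hτ]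
    rw [show τ + τ * ‖x‖ = τ * (1 + ‖x‖) by ring, Real.mul_rpow hτ.le (by positivity)]
  have h4 : (∫ x : Euc d, (τ + ‖τ • x‖) ^ (-α)) = τ ^ (-α) * cI d α := by
    simp_rw [h3]
    rw [MeasureTheory.integral_const_mul]
    rfl
  have hτd : ((τ : ℝ) ^ (d : ℕ)) ≠ 0 := pow_ne_zero _ hτ.ne'
  have h5 : (∫ z : Euc d, (τ + ‖z‖) ^ (-α)) = τ ^ (d : ℕ) * (τ ^ (-α) * cI d α) := by
    rw [← h4]
    have := h2
    rw [hfr] at this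
    rw [this, smul_eq_mul, ← mul_assoc, mul_inv_cancel₀ hτd, one_mul]
  rw [h1, h5, ← mul_assoc, ← Real.rpow_natCast τ d, ← Real.rpow_add hτ, sub_eq_add_neg]

lemma memHol_cont_right {d : ℕ} {γ β : ℝ} (hβ : 0 < β) (hγ : 0 < γ) {φ : Euc d → Euc d → ℝ}
    (h : MemHol d γ β φ) (x : Euc d) : Continuous fun z => φ x z := by
  rw [continuous_iff_continuousAt]
  intro z
  rw [Metric.continuousAt_iff]
  intro ε hε
  have hε2 : (0:ℝ) < ε / 2 := by linarith
  refine ⟨min 4⁻¹ ((ε / 2) ^ γ⁻¹),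
    lt_min (by norm_num) (Real.rpow_pos_of_pos hε2 _), fun {z'} hz' => ?_⟩
  have hd2 : dist z' z < (ε / 2) ^ γ⁻¹ := lt_of_lt_of_le hz' (min_le_right _ _)
  have hd1 : dist z' z < 4⁻¹ := lt_of_lt_of_le hz' (min_le_left _ _)
  have hzz : z' = z + (z' - z) := by abel
  have hnd : ‖z' - z‖ = dist z' z := (dist_eq_norm z' z).symm
  have hcond : 2 * ‖z' - z‖ ≤ 1 + dist x z := by
    have := dist_nonneg (x := x) (y := z)
    rw [hnd]; linarith
  have hreg := h.2.1 x z (z' - z) hcond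
  have hb : |φ x (z + (z' - z)) - φ x z| ≤
      ‖z' - z‖ ^ γ * (1 + dist x z) ^ (-((d:ℝ) + β + γ)) := by
    have := abs_nonneg (φ (x + (z' - z)) z - φ x z)
    linarith
  have h1 : |φ x z' - φ x z| ≤ ‖z' - z‖ ^ γ := by
    have hone : (1 + dist x z) ^ (-((d:ℝ) + β + γ)) ≤ 1 :=
      Real.rpow_le_one_of_one_le_of_nonpos
        (by linarith [dist_nonneg (x := x) (y := z)])
        (by have : (0:ℝ) ≤ (d:ℝ) := Nat.cast_nonneg d; linarith)
    calc |φ x z' - φ x z| = |φ x (z + (z' - z)) - φ x z| := by rw [← hzz]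
      _ ≤ ‖z' - z‖ ^ γ * (1 + dist x z) ^ (-((d:ℝ) + β + γ)) := hb
      _ ≤ ‖z' - z‖ ^ γ * 1 := by
          exact mul_le_mul_of_nonneg_left hone (Real.rpow_nonneg (norm_nonneg _) _)
      _ = ‖z' - z‖ ^ γ := mul_one _
  have h2 : ‖z' - z‖ ^ γ ≤ ((ε / 2) ^ γ⁻¹) ^ γ :=
    Real.rpow_le_rpow (norm_nonneg _) (by rw [hnd]; exact hd2.le) hγ.le
  have h3 : ((ε / 2) ^ γ⁻¹) ^ γ = ε / 2 := by
    rw [← Real.rpow_mul hε2.le, inv_mul_cancel₀ hγ.ne', Real.rpow_one]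
  rw [Real.dist_eq]
  calc |φ x z' - φ x z| ≤ ((ε / 2) ^ γ⁻¹) ^ γ := le_trans h1 h2
    _ = ε / 2 := h3
    _ < ε := by linarith

lemma memHol_cont_left {d : ℕ} {γ β : ℝ} (hβ : 0 < β) (hγ : 0 < γ) {φ : Euc d → Euc d → ℝ}
    (h : MemHol d γ β φ) (y : Euc d) : Continuous fun x => φ x y := by
  rw [continuous_iff_continuousAt]
  intro x
  rw [Metric.continuousAt_iff]
  intro ε hε
  have hε2 : (0:ℝ) < ε / 2 := by linarith
  refine ⟨min 4⁻¹ ((ε / 2) ^ γ⁻¹),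
    lt_min (by norm_num) (Real.rpow_pos_of_pos hε2 _), fun {x'} hx' => ?_⟩
  have hd2 : dist x' x < (ε / 2) ^ γ⁻¹ := lt_of_lt_of_le hx' (min_le_right _ _)
  have hd1 : dist x' x < 4⁻¹ := lt_of_lt_of_le hx' (min_le_left _ _)
  have hxx : x' = x + (x' - x) := by abel
  have hnd : ‖x' - x‖ = dist x' x := (dist_eq_norm x' x).symm
  have hcond : 2 * ‖x' - x‖ ≤ 1 + dist x y := by
    have := dist_nonneg (x := x) (y := y)
    rw [hnd]; linarith
  have hreg := h.2.1 x y (x' - x) hcond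
  have hb : |φ (x + (x' - x)) y - φ x y| ≤
      ‖x' - x‖ ^ γ * (1 + dist x y) ^ (-((d:ℝ) + β + γ)) := by
    have := abs_nonneg (φ x (y + (x' - x)) - φ x y)
    linarith
  have h1 : |φ x' y - φ x y| ≤ ‖x' - x‖ ^ γ := by
    have hone : (1 + dist x y) ^ (-((d:ℝ) + β + γ)) ≤ 1 :=
      Real.rpow_le_one_of_one_le_of_nonpos
        (by linarith [dist_nonneg (x := x) (y := y)])
        (by have : (0:ℝ) ≤ (d:ℝ) := Nat.cast_nonneg d; linarith)
    calc |φ x' y - φ x y| = |φ (x + (x' - x)) y - φ x y| := by rw [← hxx]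
      _ ≤ ‖x' - x‖ ^ γ * (1 + dist x y) ^ (-((d:ℝ) + β + γ)) := hb
      _ ≤ ‖x' - x‖ ^ γ * 1 := by
          exact mul_le_mul_of_nonneg_left hone (Real.rpow_nonneg (norm_nonneg _) _)
      _ = ‖x' - x‖ ^ γ := mul_one _
  have h2 : ‖x' - x‖ ^ γ ≤ ((ε / 2) ^ γ⁻¹) ^ γ :=
    Real.rpow_le_rpow (norm_nonneg _) (by rw [hnd]; exact hd2.le) hγ.le
  have h3 : ((ε / 2) ^ γ⁻¹) ^ γ = ε / 2 := by
    rw [← Real.rpow_mul hε2.le, inv_mul_cancel₀ hγ.ne', Real.rpow_one]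
  rw [Real.dist_eq]
  calc |φ x' y - φ x y| ≤ ((ε / 2) ^ γ⁻¹) ^ γ := le_trans h1 h2
    _ = ε / 2 := h3
    _ < ε := by linarith

end ThetaKAux
namespace ThetaKAux

lemma scale_eq {d : ℕ} {τ e E : ℝ} (hτ : 0 < τ) (hE : 0 ≤ E) :
    ((τ : ℝ) ^ (d : ℕ))⁻¹ * (1 + τ⁻¹ * E) ^ (-((d:ℝ) + e)) =
      τ ^ e * (τ + E) ^ (-((d:ℝ) + e)) := by
  have hτE : 0 < τ + E := by linarith
  have h1 : 1 + τ⁻¹ * E = τ⁻¹ * (τ + E) := by field_simp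
  have h2 : (τ⁻¹) ^ (-((d:ℝ) + e)) = τ ^ ((d:ℝ) + e) := by
    rw [Real.inv_rpow hτ.le, ← Real.rpow_neg hτ.le, neg_neg]
  have h3 : ((τ : ℝ) ^ (d : ℕ))⁻¹ = τ ^ (-(d:ℝ)) := by
    rw [← Real.rpow_natCast τ d]
    exact (Real.rpow_neg hτ.le _).symm
  rw [h1, Real.mul_rpow (by positivity) hτE.le, h2, h3, ← mul_assoc, ← Real.rpow_add hτ]
  congr 2
  ring

lemma dist_inv_smul {d : ℕ} {τ : ℝ} (hτ : 0 < τ) (a b : Euc d) :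
    dist (τ⁻¹ • a) (τ⁻¹ • b) = τ⁻¹ * dist a b := by
  rw [dist_smul₀, Real.norm_eq_abs, abs_of_pos (inv_pos.2 hτ)]

lemma memHol_size {d : ℕ} {γ β : ℝ} {φ : Euc d → Euc d → ℝ}
    (hφ : MemHol d γ β φ) {τ : ℝ} (hτ : 0 < τ) (a b : Euc d) :
    |((τ : ℝ) ^ (d : ℕ))⁻¹ * φ (τ⁻¹ • a) (τ⁻¹ • b)| ≤
      τ ^ β * (τ + dist a b) ^ (-((d:ℝ) + β)) := by
  have hpow : (0:ℝ) < ((τ : ℝ) ^ (d : ℕ))⁻¹ := by positivity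
  rw [abs_mul, abs_of_pos hpow]
  calc ((τ : ℝ) ^ (d : ℕ))⁻¹ * |φ (τ⁻¹ • a) (τ⁻¹ • b)|
      ≤ ((τ : ℝ) ^ (d : ℕ))⁻¹ * (1 + dist (τ⁻¹ • a) (τ⁻¹ • b)) ^ (-((d:ℝ) + β)) :=
        mul_le_mul_of_nonneg_left (hφ.1 _ _) hpow.le
    _ = τ ^ β * (τ + dist a b) ^ (-((d:ℝ) + β)) := by
        rw [dist_inv_smul hτ, scale_eq hτ dist_nonneg]

/-- Regularity in the second variable, rescaled. -/
lemma memHol_reg_right {d : ℕ} {γ β : ℝ} (hγ : 0 ≤ γ) {φ : Euc d → Euc d → ℝ}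
    (hφ : MemHol d γ β φ) {τ : ℝ} (hτ : 0 < τ) (a b b' : Euc d)
    (hcond : 2 * dist b' b ≤ τ + dist a b) :
    |((τ : ℝ) ^ (d : ℕ))⁻¹ * φ (τ⁻¹ • a) (τ⁻¹ • b') -
        ((τ : ℝ) ^ (d : ℕ))⁻¹ * φ (τ⁻¹ • a) (τ⁻¹ • b)| ≤
      dist b' b ^ γ * (τ ^ β * (τ + dist a b) ^ (-((d:ℝ) + β + γ))) := by
  have hpow : (0:ℝ) < ((τ : ℝ) ^ (d : ℕ))⁻¹ := by positivity
  have hτE : 0 < τ + dist a b := by linarith [dist_nonneg (x := a) (y := b)]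
  have hnrm : ‖τ⁻¹ • (b' - b)‖ = τ⁻¹ * dist b' b := by
    rw [norm_smul, Real.norm_eq_abs, abs_of_pos (inv_pos.2 hτ), ← dist_eq_norm]
  have hcnd : 2 * ‖τ⁻¹ • (b' - b)‖ ≤ 1 + dist (τ⁻¹ • a) (τ⁻¹ • b) := by
    rw [hnrm, dist_inv_smul hτ]
    have := mul_le_mul_of_nonneg_left hcond (inv_pos.2 hτ).le
    calc 2 * (τ⁻¹ * dist b' b) = τ⁻¹ * (2 * dist b' b) := by ring
      _ ≤ τ⁻¹ * (τ + dist a b) := this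
      _ = 1 + τ⁻¹ * dist a b := by
          rw [mul_add, inv_mul_cancel₀ hτ.ne']
  have hreg := hφ.2.1 (τ⁻¹ • a) (τ⁻¹ • b) (τ⁻¹ • (b' - b)) hcnd
  have hb'eq : τ⁻¹ • b + τ⁻¹ • (b' - b) = τ⁻¹ • b' := by
    rw [← smul_add]
    congr 1
    abel
  rw [hb'eq] at hreg
  have habs : |φ (τ⁻¹ • a) (τ⁻¹ • b') - φ (τ⁻¹ • a) (τ⁻¹ • b)| ≤
      ‖τ⁻¹ • (b' - b)‖ ^ γ *
        (1 + dist (τ⁻¹ • a) (τ⁻¹ • b)) ^ (-((d:ℝ) + β + γ)) := by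
    have := abs_nonneg (φ (τ⁻¹ • a + τ⁻¹ • (b' - b)) (τ⁻¹ • b) - φ (τ⁻¹ • a) (τ⁻¹ • b))
    linarith
  rw [← mul_sub, abs_mul, abs_of_pos hpow]
  calc ((τ : ℝ) ^ (d : ℕ))⁻¹ * |φ (τ⁻¹ • a) (τ⁻¹ • b') - φ (τ⁻¹ • a) (τ⁻¹ • b)|
      ≤ ((τ : ℝ) ^ (d : ℕ))⁻¹ * (‖τ⁻¹ • (b' - b)‖ ^ γ *
          (1 + dist (τ⁻¹ • a) (τ⁻¹ • b)) ^ (-((d:ℝ) + β + γ))) :=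
        mul_le_mul_of_nonneg_left habs hpow.le
    _ = dist b' b ^ γ * (τ ^ β * (τ + dist a b) ^ (-((d:ℝ) + β + γ))) := by
        rw [hnrm, dist_inv_smul hτ]
        rw [Real.mul_rpow (inv_pos.2 hτ).le dist_nonneg]
        rw [show -((d:ℝ) + β + γ) = -((d:ℝ) + (β + γ)) by ring]
        rw [show ((τ : ℝ) ^ (d : ℕ))⁻¹ * (τ⁻¹ ^ γ * dist b' b ^ γ *
              (1 + τ⁻¹ * dist a b) ^ (-((d:ℝ) + (β + γ)))) =
            (τ⁻¹ ^ γ * dist b' b ^ γ) * (((τ : ℝ) ^ (d : ℕ))⁻¹ *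
              (1 + τ⁻¹ * dist a b) ^ (-((d:ℝ) + (β + γ)))) by ring]
        rw [scale_eq hτ dist_nonneg]
        rw [Real.inv_rpow hτ.le, ← Real.rpow_neg hτ.le]
        rw [show τ ^ (-γ) * dist b' b ^ γ * (τ ^ (β + γ) * (τ + dist a b) ^ (-((d:ℝ) + (β + γ)))) =
            dist b' b ^ γ * ((τ ^ (-γ) * τ ^ (β + γ)) * (τ + dist a b) ^ (-((d:ℝ) + (β + γ)))) by ring]
        rw [← Real.rpow_add hτ]
        rw [show -γ + (β + γ) = β by ring]

/-- Regularity in the first variable, rescaled. -/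
lemma memHol_reg_left {d : ℕ} {γ β : ℝ} (hγ : 0 ≤ γ) {φ : Euc d → Euc d → ℝ}
    (hφ : MemHol d γ β φ) {τ : ℝ} (hτ : 0 < τ) (a a' b : Euc d)
    (hcond : 2 * dist a' a ≤ τ + dist a b) :
    |((τ : ℝ) ^ (d : ℕ))⁻¹ * φ (τ⁻¹ • a') (τ⁻¹ • b) -
        ((τ : ℝ) ^ (d : ℕ))⁻¹ * φ (τ⁻¹ • a) (τ⁻¹ • b)| ≤
      dist a' a ^ γ * (τ ^ β * (τ + dist a b) ^ (-((d:ℝ) + β + γ))) := by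
  have hpow : (0:ℝ) < ((τ : ℝ) ^ (d : ℕ))⁻¹ := by positivity
  have hτE : 0 < τ + dist a b := by linarith [dist_nonneg (x := a) (y := b)]
  have hnrm : ‖τ⁻¹ • (a' - a)‖ = τ⁻¹ * dist a' a := by
    rw [norm_smul, Real.norm_eq_abs, abs_of_pos (inv_pos.2 hτ), ← dist_eq_norm]
  have hcnd : 2 * ‖τ⁻¹ • (a' - a)‖ ≤ 1 + dist (τ⁻¹ • a) (τ⁻¹ • b) := by
    rw [hnrm, dist_inv_smul hτ]
    have := mul_le_mul_of_nonneg_left hcond (inv_pos.2 hτ).le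
    calc 2 * (τ⁻¹ * dist a' a) = τ⁻¹ * (2 * dist a' a) := by ring
      _ ≤ τ⁻¹ * (τ + dist a b) := this
      _ = 1 + τ⁻¹ * dist a b := by
          rw [mul_add, inv_mul_cancel₀ hτ.ne']
  have hreg := hφ.2.1 (τ⁻¹ • a) (τ⁻¹ • b) (τ⁻¹ • (a' - a)) hcnd
  have ha'eq : τ⁻¹ • a + τ⁻¹ • (a' - a) = τ⁻¹ • a' := by
    rw [← smul_add]
    congr 1
    abel
  rw [ha'eq] at hreg
  have habs : |φ (τ⁻¹ • a') (τ⁻¹ • b) - φ (τ⁻¹ • a) (τ⁻¹ • b)| ≤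
      ‖τ⁻¹ • (a' - a)‖ ^ γ *
        (1 + dist (τ⁻¹ • a) (τ⁻¹ • b)) ^ (-((d:ℝ) + β + γ)) := by
    have := abs_nonneg (φ (τ⁻¹ • a) (τ⁻¹ • b + τ⁻¹ • (a' - a)) - φ (τ⁻¹ • a) (τ⁻¹ • b))
    linarith
  rw [← mul_sub, abs_mul, abs_of_pos hpow]
  calc ((τ : ℝ) ^ (d : ℕ))⁻¹ * |φ (τ⁻¹ • a') (τ⁻¹ • b) - φ (τ⁻¹ • a) (τ⁻¹ • b)|
      ≤ ((τ : ℝ) ^ (d : ℕ))⁻¹ * (‖τ⁻¹ • (a' - a)‖ ^ γ *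
          (1 + dist (τ⁻¹ • a) (τ⁻¹ • b)) ^ (-((d:ℝ) + β + γ))) :=
        mul_le_mul_of_nonneg_left habs hpow.le
    _ = dist a' a ^ γ * (τ ^ β * (τ + dist a b) ^ (-((d:ℝ) + β + γ))) := by
        rw [hnrm, dist_inv_smul hτ]
        rw [Real.mul_rpow (inv_pos.2 hτ).le dist_nonneg]
        rw [show -((d:ℝ) + β + γ) = -((d:ℝ) + (β + γ)) by ring]
        rw [show ((τ : ℝ) ^ (d : ℕ))⁻¹ * (τ⁻¹ ^ γ * dist a' a ^ γ *
              (1 + τ⁻¹ * dist a b) ^ (-((d:ℝ) + (β + γ)))) =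
            (τ⁻¹ ^ γ * dist a' a ^ γ) * (((τ : ℝ) ^ (d : ℕ))⁻¹ *
              (1 + τ⁻¹ * dist a b) ^ (-((d:ℝ) + (β + γ)))) by ring]
        rw [scale_eq hτ dist_nonneg]
        rw [Real.inv_rpow hτ.le, ← Real.rpow_neg hτ.le]
        rw [show τ ^ (-γ) * dist a' a ^ γ * (τ ^ (β + γ) * (τ + dist a b) ^ (-((d:ℝ) + (β + γ)))) =
            dist a' a ^ γ * ((τ ^ (-γ) * τ ^ (β + γ)) * (τ + dist a b) ^ (-((d:ℝ) + (β + γ)))) by ring]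
        rw [← Real.rpow_add hτ]
        rw [show -γ + (β + γ) = β by ring]

end ThetaKAux
namespace ThetaKAux

/-- The constant in the core estimate. -/
noncomputable def C0 (d : ℕ) (β γ : ℝ) : ℝ :=
  cI d ((d:ℝ) + β - min γ β / 2) + 2 * cI d ((d:ℝ) + β / 2) +
    2 ^ ((d:ℝ) + β) * cI d ((d:ℝ) + β)

lemma C0_nonneg (d : ℕ) (β γ : ℝ) : 0 ≤ C0 d β γ := by
  have n1 := cI_nonneg d ((d:ℝ) + β - min γ β / 2)
  have n2 := cI_nonneg d ((d:ℝ) + β / 2)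
  have n3 := cI_nonneg d ((d:ℝ) + β)
  have h2 : (0:ℝ) ≤ 2 ^ ((d:ℝ) + β) := Real.rpow_nonneg (by norm_num) _
  unfold C0
  nlinarith

/-- Core almost-orthogonality estimate: `F` has mean zero and lives at the small
scale `σ` around `p`; `G` lives at the big scale `M` around `c` and is Hölder at `p`. -/
lemma core {d : ℕ} {β γ : ℝ} (hβ : 0 < β) (hβ1 : β ≤ 1) (hγ : 0 < γ) (hγ1 : γ ≤ 1)
    (p c : Euc d) {σ M A B : ℝ} (hσ : 0 < σ) (hσM : σ ≤ M) (hA : 0 < A) (hB : 0 < B)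
    {F G : Euc d → ℝ} (hFc : Continuous F) (hGc : Continuous G)
    (hF0 : (∫ z, F z) = 0)
    (hFb : ∀ z, |F z| ≤ A * (σ ^ β * (σ + dist z p) ^ (-((d:ℝ) + β))))
    (hGb : ∀ z, |G z| ≤ B * (M ^ β * (M + dist z c) ^ (-((d:ℝ) + β))))
    (hGr : ∀ z, 2 * dist z p ≤ M + dist p c →
      |G z - G p| ≤ B * (dist z p ^ γ * (M ^ β * (M + dist p c) ^ (-((d:ℝ) + β + γ))))) :
    |∫ z, F z * G z| ≤
      A * B * C0 d β γ *
        ((σ / M) ^ (min γ β / 2) * (M ^ β * (M + dist p c) ^ (-((d:ℝ) + β)))) := by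
  have hd0 : (0:ℝ) ≤ (d:ℝ) := Nat.cast_nonneg d
  set ν := min γ β / 2 with hν
  have hminpos : 0 < min γ β := lt_min hγ hβ
  have hν0 : 0 < ν := by rw [hν]; linarith
  have hνγ : ν ≤ γ := by
    have := min_le_left γ β
    rw [hν]; linarith
  have hνβ2 : 2 * ν ≤ β := by
    have := min_le_right γ β
    rw [hν]; linarith
  have hνβ : ν < β := by linarith
  have hM : 0 < M := lt_of_lt_of_le hσ hσM
  have hr0 : (0:ℝ) ≤ dist p c := dist_nonneg
  set r := dist p c with hrdef
  set D := M + r with hDdef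
  have hD : 0 < D := by rw [hDdef]; linarith
  have hMD : M ≤ D := by rw [hDdef]; linarith
  set R := D / 2 with hRdef
  have hR : 0 < R := by rw [hRdef]; linarith
  have hMR : M / 2 ≤ R := by rw [hRdef]; linarith
  have hα1 : (d:ℝ) < (d:ℝ) + β - ν := by linarith
  have hα2 : (d:ℝ) < (d:ℝ) + β / 2 := by linarith
  have hα3 : (d:ℝ) < (d:ℝ) + β := by linarith
  set c1 : ℝ := A * B * (σ ^ β * (M ^ (β - ν) * D ^ (-((d:ℝ) + β)))) with hc1
  set c2 : ℝ := A * B * (σ ^ β * (R ^ (-(β / 2)) * (M ^ β * D ^ (-((d:ℝ) + β))))) with hc2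
  set c3 : ℝ := A * B * (σ ^ β * (R ^ (-((d:ℝ) + β)) * M ^ β)) with hc3
  have hc1p : 0 < c1 := by rw [hc1]; positivity
  have hc2p : 0 < c2 := by rw [hc2]; positivity
  have hc3p : 0 < c3 := by rw [hc3]; positivity
  -- integrability
  have hFint : Integrable F := by
    refine ((integrable_bump hα3 hσ p).const_mul (A * σ ^ β)).mono'
      hFc.aestronglyMeasurable ?_
    filter_upwards with z
    rw [Real.norm_eq_abs]
    calc |F z| ≤ A * (σ ^ β * (σ + dist z p) ^ (-((d:ℝ) + β))) := hFb z
      _ = A * σ ^ β * (σ + dist z p) ^ (-((d:ℝ) + β)) := by ring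
  have hGbd : ∀ z, |G z| ≤ B * M ^ (-(d:ℝ)) := by
    intro z
    refine le_trans (hGb z) ?_
    have h1 : (M + dist z c) ^ (-((d:ℝ) + β)) ≤ M ^ (-((d:ℝ) + β)) :=
      Real.rpow_le_rpow_of_nonpos hM
        (by linarith [dist_nonneg (x := z) (y := c)]) (by linarith)
    calc B * (M ^ β * (M + dist z c) ^ (-((d:ℝ) + β)))
        ≤ B * (M ^ β * M ^ (-((d:ℝ) + β))) := by
          apply mul_le_mul_of_nonneg_left
            (mul_le_mul_of_nonneg_left h1 (Real.rpow_nonneg hM.le _)) hB.le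
      _ = B * M ^ (-(d:ℝ)) := by
          rw [← Real.rpow_add hM, show β + -((d:ℝ) + β) = -(d:ℝ) by ring]
  have hFGint : Integrable (fun z => F z * G z) := by
    refine ((integrable_bump hα3 hσ p).const_mul (B * M ^ (-(d:ℝ)) * (A * σ ^ β))).mono'
      (hFc.mul hGc).aestronglyMeasurable ?_
    filter_upwards with z
    rw [Real.norm_eq_abs, abs_mul]
    calc |F z| * |G z|
        ≤ (A * (σ ^ β * (σ + dist z p) ^ (-((d:ℝ) + β)))) * (B * M ^ (-(d:ℝ))) :=
          mul_le_mul (hFb z) (hGbd z) (abs_nonneg _) (by positivity)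
      _ = B * M ^ (-(d:ℝ)) * (A * σ ^ β) * (σ + dist z p) ^ (-((d:ℝ) + β)) := by ring
  have hFGpint : Integrable (fun z => F z * G p) := hFint.mul_const (G p)
  have hsub : (∫ z, (F z * G z - F z * G p)) = ∫ z, F z * G z := by
    rw [integral_sub hFGint hFGpint, MeasureTheory.integral_mul_const, hF0, zero_mul, sub_zero]
  -- pointwise bound
  have hpt : ∀ z, |F z * G z - F z * G p| ≤
      c1 * (σ + dist z p) ^ (-((d:ℝ) + β - ν)) +
        (c2 * (σ + dist z p) ^ (-((d:ℝ) + β / 2)) +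
          c3 * (M + dist z c) ^ (-((d:ℝ) + β))) := by
    intro z
    have hq0 : (0:ℝ) ≤ dist z p := dist_nonneg
    have hσq : 0 < σ + dist z p := by linarith
    have hMc : 0 < M + dist z c := by linarith [dist_nonneg (x := z) (y := c)]
    have e1nn : 0 ≤ c1 * (σ + dist z p) ^ (-((d:ℝ) + β - ν)) := by positivity
    have e2nn : 0 ≤ c2 * (σ + dist z p) ^ (-((d:ℝ) + β / 2)) := by positivity
    have e3nn : 0 ≤ c3 * (M + dist z c) ^ (-((d:ℝ) + β)) := by positivity
    have t2 : |G p| ≤ B * (M ^ β * D ^ (-((d:ℝ) + β))) := by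
      have := hGb p
      rw [← hrdef, ← hDdef] at this
      exact this
    rw [show F z * G z - F z * G p = F z * (G z - G p) by ring, abs_mul]
    by_cases hcase : 2 * dist z p ≤ D
    · -- main region: use Hölder regularity
      have hGhol := hGr z hcase
      have hq1 : dist z p / D ≤ 1 := by
        rw [div_le_one hD]; linarith
      have hmin : |G z - G p| ≤
          B * (dist z p ^ ν * (M ^ (β - ν) * D ^ (-((d:ℝ) + β)))) := by
        refine le_trans hGhol ?_
        have e1 : dist z p ^ γ * (M ^ β * D ^ (-((d:ℝ) + β + γ)))
            = (M ^ β * D ^ (-((d:ℝ) + β))) * (dist z p / D) ^ γ := by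
          rw [Real.div_rpow hq0 hD.le]
          rw [show -((d:ℝ) + β + γ) = -((d:ℝ) + β) + -γ by ring, Real.rpow_add hD]
          rw [Real.rpow_neg hD.le γ, div_eq_mul_inv]
          ring
        have e2 : (dist z p / D) ^ γ ≤ (dist z p / D) ^ ν :=
          Real.rpow_le_rpow_of_exponent_ge' (by positivity) hq1 hν0.le hνγ
        have e4 : (dist z p / D) ^ ν ≤ dist z p ^ ν * M ^ (-ν) := by
          rw [Real.div_rpow hq0 hD.le, div_eq_mul_inv, ← Real.rpow_neg hD.le]
          exact mul_le_mul_of_nonneg_left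
            (Real.rpow_le_rpow_of_nonpos hM hMD (by linarith))
            (Real.rpow_nonneg hq0 _)
        calc B * (dist z p ^ γ * (M ^ β * D ^ (-((d:ℝ) + β + γ))))
            = B * ((M ^ β * D ^ (-((d:ℝ) + β))) * (dist z p / D) ^ γ) := by rw [e1]
          _ ≤ B * ((M ^ β * D ^ (-((d:ℝ) + β))) * (dist z p ^ ν * M ^ (-ν))) := by
              apply mul_le_mul_of_nonneg_left
                (mul_le_mul_of_nonneg_left (le_trans e2 e4) (by positivity)) hB.le
          _ = B * (dist z p ^ ν * ((M ^ β * M ^ (-ν)) * D ^ (-((d:ℝ) + β)))) := by ring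
          _ = B * (dist z p ^ ν * (M ^ (β - ν) * D ^ (-((d:ℝ) + β)))) := by
              rw [← Real.rpow_add hM, show β + -ν = β - ν by ring]
      have hkey : dist z p ^ ν * (σ + dist z p) ^ (-((d:ℝ) + β)) ≤
          (σ + dist z p) ^ (-((d:ℝ) + β - ν)) := by
        have a1 : dist z p ^ ν ≤ (σ + dist z p) ^ ν :=
          Real.rpow_le_rpow hq0 (by linarith) hν0.le
        calc dist z p ^ ν * (σ + dist z p) ^ (-((d:ℝ) + β))
            ≤ (σ + dist z p) ^ ν * (σ + dist z p) ^ (-((d:ℝ) + β)) :=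
              mul_le_mul_of_nonneg_right a1 (Real.rpow_nonneg hσq.le _)
          _ = (σ + dist z p) ^ (-((d:ℝ) + β - ν)) := by
              rw [← Real.rpow_add hσq, show ν + -((d:ℝ) + β) = -((d:ℝ) + β - ν) by ring]
      calc |F z| * |G z - G p|
          ≤ (A * (σ ^ β * (σ + dist z p) ^ (-((d:ℝ) + β)))) *
              (B * (dist z p ^ ν * (M ^ (β - ν) * D ^ (-((d:ℝ) + β))))) :=
            mul_le_mul (hFb z) hmin (abs_nonneg _) (by positivity)
        _ = (A * B * (σ ^ β * (M ^ (β - ν) * D ^ (-((d:ℝ) + β))))) *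
              (dist z p ^ ν * (σ + dist z p) ^ (-((d:ℝ) + β))) := by ring
        _ ≤ (A * B * (σ ^ β * (M ^ (β - ν) * D ^ (-((d:ℝ) + β))))) *
              (σ + dist z p) ^ (-((d:ℝ) + β - ν)) := by
            apply mul_le_mul_of_nonneg_left hkey (by positivity)
        _ = c1 * (σ + dist z p) ^ (-((d:ℝ) + β - ν)) := by rw [hc1]
        _ ≤ _ := by linarith
    · -- far region
      push_neg at hcase
      have hRq : R ≤ dist z p := by rw [hRdef]; linarith
      have hF2 : |F z| * |G p| ≤ c2 * (σ + dist z p) ^ (-((d:ℝ) + β / 2)) := by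
        have split : (σ + dist z p) ^ (-((d:ℝ) + β)) ≤
            R ^ (-(β / 2)) * (σ + dist z p) ^ (-((d:ℝ) + β / 2)) := by
          have b1 : (σ + dist z p) ^ (-((d:ℝ) + β)) =
              (σ + dist z p) ^ (-(β / 2)) * (σ + dist z p) ^ (-((d:ℝ) + β / 2)) := by
            rw [← Real.rpow_add hσq, show -(β / 2) + -((d:ℝ) + β / 2) = -((d:ℝ) + β) by ring]
          have b2 : (σ + dist z p) ^ (-(β / 2)) ≤ R ^ (-(β / 2)) :=
            Real.rpow_le_rpow_of_nonpos hR (by linarith) (by linarith)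
          rw [b1]
          exact mul_le_mul_of_nonneg_right b2 (Real.rpow_nonneg hσq.le _)
        calc |F z| * |G p|
            ≤ (A * (σ ^ β * (σ + dist z p) ^ (-((d:ℝ) + β)))) *
                (B * (M ^ β * D ^ (-((d:ℝ) + β)))) :=
              mul_le_mul (hFb z) t2 (abs_nonneg _) (by positivity)
          _ ≤ (A * (σ ^ β * (R ^ (-(β / 2)) * (σ + dist z p) ^ (-((d:ℝ) + β / 2))))) *
                (B * (M ^ β * D ^ (-((d:ℝ) + β)))) := by
              apply mul_le_mul_of_nonneg_right _ (by positivity)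
              apply mul_le_mul_of_nonneg_left
                (mul_le_mul_of_nonneg_left split (by positivity)) hA.le
          _ = c2 * (σ + dist z p) ^ (-((d:ℝ) + β / 2)) := by rw [hc2]; ring
      have hF3 : |F z| * |G z| ≤ c3 * (M + dist z c) ^ (-((d:ℝ) + β)) := by
        have split : (σ + dist z p) ^ (-((d:ℝ) + β)) ≤ R ^ (-((d:ℝ) + β)) :=
          Real.rpow_le_rpow_of_nonpos hR (by linarith) (by linarith)
        calc |F z| * |G z|
            ≤ (A * (σ ^ β * (σ + dist z p) ^ (-((d:ℝ) + β)))) *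
                (B * (M ^ β * (M + dist z c) ^ (-((d:ℝ) + β)))) :=
              mul_le_mul (hFb z) (hGb z) (abs_nonneg _) (by positivity)
          _ ≤ (A * (σ ^ β * R ^ (-((d:ℝ) + β)))) *
                (B * (M ^ β * (M + dist z c) ^ (-((d:ℝ) + β)))) := by
              apply mul_le_mul_of_nonneg_right _ (by positivity)
              apply mul_le_mul_of_nonneg_left
                (mul_le_mul_of_nonneg_left split (by positivity)) hA.le
          _ = c3 * (M + dist z c) ^ (-((d:ℝ) + β)) := by rw [hc3]; ring
      calc |F z| * |G z - G p|
          ≤ |F z| * (|G z| + |G p|) := by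
            apply mul_le_mul_of_nonneg_left _ (abs_nonneg _)
            calc |G z - G p| = |G z + -G p| := by rw [sub_eq_add_neg]
              _ ≤ |G z| + |-G p| := abs_add_le _ _
              _ = |G z| + |G p| := by rw [abs_neg]
        _ = |F z| * |G z| + |F z| * |G p| := by ring
        _ ≤ c3 * (M + dist z c) ^ (-((d:ℝ) + β)) +
              c2 * (σ + dist z p) ^ (-((d:ℝ) + β / 2)) := add_le_add hF3 hF2
        _ ≤ _ := by linarith
  -- integrate the pointwise bound
  have hint1 : Integrable (fun z => c1 * (σ + dist z p) ^ (-((d:ℝ) + β - ν))) :=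
    (integrable_bump hα1 hσ p).const_mul c1
  have hint2 : Integrable (fun z => c2 * (σ + dist z p) ^ (-((d:ℝ) + β / 2))) :=
    (integrable_bump hα2 hσ p).const_mul c2
  have hint3 : Integrable (fun z => c3 * (M + dist z c) ^ (-((d:ℝ) + β))) :=
    (integrable_bump hα3 hM c).const_mul c3
  have hint23 : Integrable (fun z : Euc d =>
      c2 * (σ + dist z p) ^ (-((d:ℝ) + β / 2)) + c3 * (M + dist z c) ^ (-((d:ℝ) + β))) :=
    hint2.add hint3
  have hmain : |∫ z, F z * G z| ≤
      c1 * (σ ^ ((d:ℝ) - ((d:ℝ) + β - ν)) * cI d ((d:ℝ) + β - ν)) +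
        (c2 * (σ ^ ((d:ℝ) - ((d:ℝ) + β / 2)) * cI d ((d:ℝ) + β / 2)) +
          c3 * (M ^ ((d:ℝ) - ((d:ℝ) + β)) * cI d ((d:ℝ) + β))) := by
    calc |∫ z, F z * G z| = |∫ z, (F z * G z - F z * G p)| := by rw [hsub]
      _ ≤ ∫ z, |F z * G z - F z * G p| := by
          simpa [Real.norm_eq_abs] using
            MeasureTheory.norm_integral_le_integral_norm
              (μ := volume) (fun z => F z * G z - F z * G p)
      _ ≤ ∫ z, (c1 * (σ + dist z p) ^ (-((d:ℝ) + β - ν)) +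
            (c2 * (σ + dist z p) ^ (-((d:ℝ) + β / 2)) +
              c3 * (M + dist z c) ^ (-((d:ℝ) + β)))) := by
          apply integral_mono ((hFGint.sub hFGpint).abs) (hint1.add hint23)
          intro z
          exact hpt z
      _ = _ := by
          rw [integral_add hint1 hint23, integral_add hint2 hint3,
            MeasureTheory.integral_const_mul, MeasureTheory.integral_const_mul,
            MeasureTheory.integral_const_mul,
            integral_bump hα1 hσ p, integral_bump hα2 hσ p, integral_bump hα3 hM c]
  -- final algebra
  set X : ℝ := (σ / M) ^ ν * (M ^ β * D ^ (-((d:ℝ) + β))) with hX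
  have q3 : (σ / M) ^ ν = σ ^ ν * M ^ (-ν) := by
    rw [Real.div_rpow hσ.le hM.le, Real.rpow_neg hM.le, div_eq_mul_inv]
  have hsm1 : 0 < σ / M := div_pos hσ hM
  have hsm2 : σ / M ≤ 1 := (div_le_one hM).2 hσM
  have hT1 : c1 * (σ ^ ((d:ℝ) - ((d:ℝ) + β - ν)) * cI d ((d:ℝ) + β - ν)) =
      A * B * cI d ((d:ℝ) + β - ν) * X := by
    rw [hc1, hX, q3]
    rw [show (d:ℝ) - ((d:ℝ) + β - ν) = ν - β by ring]
    rw [show M ^ (β - ν) = M ^ β * M ^ (-ν) by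
      rw [← Real.rpow_add hM, show β + -ν = β - ν by ring]]
    rw [show A * B * (σ ^ β * (M ^ β * M ^ (-ν) * D ^ (-((d:ℝ) + β)))) *
          (σ ^ (ν - β) * cI d ((d:ℝ) + β - ν)) =
        A * B * cI d ((d:ℝ) + β - ν) *
          ((σ ^ β * σ ^ (ν - β)) * M ^ (-ν) * (M ^ β * D ^ (-((d:ℝ) + β)))) by ring]
    rw [← Real.rpow_add hσ, show β + (ν - β) = ν by ring]
    try ring
  have hT2 : c2 * (σ ^ ((d:ℝ) - ((d:ℝ) + β / 2)) * cI d ((d:ℝ) + β / 2)) ≤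
      A * B * (2 * cI d ((d:ℝ) + β / 2)) * X := by
    have key2 : σ ^ (β / 2) * R ^ (-(β / 2)) ≤ 2 * (σ / M) ^ ν := by
      have k1 : σ ^ (β / 2) * R ^ (-(β / 2)) = (σ / R) ^ (β / 2) := by
        rw [Real.div_rpow hσ.le hR.le, Real.rpow_neg hR.le]
        ring
      have k2 : σ / R ≤ 2 * (σ / M) := by
        have k2a : σ / R ≤ σ / (M / 2) :=
          div_le_div_of_nonneg_left hσ.le (by linarith) hMR
        have k2b : σ / (M / 2) = 2 * (σ / M) := by
          field_simp
        linarith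
      have k3 : (σ / R) ^ (β / 2) ≤ (2 * (σ / M)) ^ (β / 2) :=
        Real.rpow_le_rpow (by positivity) k2 (by linarith)
      have k4 : (2 * (σ / M)) ^ (β / 2) = 2 ^ (β / 2) * (σ / M) ^ (β / 2) :=
        Real.mul_rpow (by norm_num) (by positivity)
      have k5 : (2:ℝ) ^ (β / 2) ≤ 2 := by
        calc (2:ℝ) ^ (β / 2) ≤ 2 ^ (1:ℝ) :=
              Real.rpow_le_rpow_of_exponent_le one_le_two (by linarith)
          _ = 2 := Real.rpow_one 2
      have k6 : (σ / M) ^ (β / 2) ≤ (σ / M) ^ ν :=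
        Real.rpow_le_rpow_of_exponent_ge hsm1 hsm2 (by linarith)
      calc σ ^ (β / 2) * R ^ (-(β / 2)) = (σ / R) ^ (β / 2) := k1
        _ ≤ 2 ^ (β / 2) * (σ / M) ^ (β / 2) := by rw [← k4]; exact k3
        _ ≤ 2 * (σ / M) ^ ν :=
            mul_le_mul k5 k6 (Real.rpow_nonneg (by positivity) _) (by norm_num)
    have q4 : σ ^ β * σ ^ (-(β / 2)) = σ ^ (β / 2) := by
      rw [← Real.rpow_add hσ, show β + -(β / 2) = β / 2 by ring]
    calc c2 * (σ ^ ((d:ℝ) - ((d:ℝ) + β / 2)) * cI d ((d:ℝ) + β / 2))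
        = (σ ^ β * σ ^ (-(β / 2))) * R ^ (-(β / 2)) *
            (A * B * cI d ((d:ℝ) + β / 2) * (M ^ β * D ^ (-((d:ℝ) + β)))) := by
          rw [hc2, show (d:ℝ) - ((d:ℝ) + β / 2) = -(β / 2) by ring]
          ring
      _ = (σ ^ (β / 2) * R ^ (-(β / 2))) *
            (A * B * cI d ((d:ℝ) + β / 2) * (M ^ β * D ^ (-((d:ℝ) + β)))) := by rw [q4]
      _ ≤ (2 * (σ / M) ^ ν) *
            (A * B * cI d ((d:ℝ) + β / 2) * (M ^ β * D ^ (-((d:ℝ) + β)))) := by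
          apply mul_le_mul_of_nonneg_right key2
          have := cI_nonneg d ((d:ℝ) + β / 2)
          positivity
      _ = A * B * (2 * cI d ((d:ℝ) + β / 2)) * X := by rw [hX]; ring
  have hT3 : c3 * (M ^ ((d:ℝ) - ((d:ℝ) + β)) * cI d ((d:ℝ) + β)) ≤
      A * B * (2 ^ ((d:ℝ) + β) * cI d ((d:ℝ) + β)) * X := by
    have q5 : M ^ β * M ^ ((d:ℝ) - ((d:ℝ) + β)) = M ^ (-β) * M ^ β := by
      rw [← Real.rpow_add hM, ← Real.rpow_add hM]
      congr 1
      ring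
    have q6 : M ^ (-β) * M ^ β = 1 := by
      rw [← Real.rpow_add hM]
      simp
    have keyR : R ^ (-((d:ℝ) + β)) = 2 ^ ((d:ℝ) + β) * D ^ (-((d:ℝ) + β)) := by
      have hR2 : R = D * 2⁻¹ := by rw [hRdef]; ring
      rw [hR2, Real.mul_rpow hD.le (by norm_num), Real.inv_rpow (by norm_num : (0:ℝ) ≤ 2),
        Real.rpow_neg (by norm_num : (0:ℝ) ≤ 2), inv_inv, mul_comm]
    have key3 : σ ^ β ≤ (σ / M) ^ ν * M ^ β := by
      have k7 : σ ^ β = (σ / M) ^ β * M ^ β := by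
        rw [Real.div_rpow hσ.le hM.le, div_mul_cancel₀]
        exact (Real.rpow_pos_of_pos hM β).ne'
      rw [k7]
      exact mul_le_mul_of_nonneg_right
        (Real.rpow_le_rpow_of_exponent_ge hsm1 hsm2 (by linarith))
        (Real.rpow_nonneg hM.le _)
    calc c3 * (M ^ ((d:ℝ) - ((d:ℝ) + β)) * cI d ((d:ℝ) + β))
        = (M ^ β * M ^ ((d:ℝ) - ((d:ℝ) + β))) *
            (A * B * cI d ((d:ℝ) + β) * (σ ^ β * R ^ (-((d:ℝ) + β)))) := by
          rw [hc3]; ring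
      _ = A * B * cI d ((d:ℝ) + β) * (σ ^ β * R ^ (-((d:ℝ) + β))) := by
          rw [q5, q6, one_mul]
      _ = A * B * cI d ((d:ℝ) + β) * (σ ^ β * (2 ^ ((d:ℝ) + β) * D ^ (-((d:ℝ) + β)))) := by
          rw [keyR]
      _ ≤ A * B * cI d ((d:ℝ) + β) *
            (((σ / M) ^ ν * M ^ β) * (2 ^ ((d:ℝ) + β) * D ^ (-((d:ℝ) + β)))) := by
          apply mul_le_mul_of_nonneg_left
          · exact mul_le_mul_of_nonneg_right key3 (by positivity)
          · have := cI_nonneg d ((d:ℝ) + β)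
            positivity
      _ = A * B * (2 ^ ((d:ℝ) + β) * cI d ((d:ℝ) + β)) * X := by rw [hX]; ring
  have hfinal : A * B * C0 d β γ * ((σ / M) ^ ν * (M ^ β * D ^ (-((d:ℝ) + β)))) =
      A * B * cI d ((d:ℝ) + β - ν) * X +
        (A * B * (2 * cI d ((d:ℝ) + β / 2)) * X +
          A * B * (2 ^ ((d:ℝ) + β) * cI d ((d:ℝ) + β)) * X) := by
    rw [hX]
    unfold C0
    rw [← hν]
    ring
  calc |∫ z, F z * G z| ≤ _ := hmain
    _ ≤ A * B * cI d ((d:ℝ) + β - ν) * X +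
        (A * B * (2 * cI d ((d:ℝ) + β / 2)) * X +
          A * B * (2 ^ ((d:ℝ) + β) * cI d ((d:ℝ) + β)) * X) :=
      add_le_add (le_of_eq hT1) (add_le_add hT2 hT3)
    _ = A * B * C0 d β γ * ((σ / M) ^ ν * (M ^ β * D ^ (-((d:ℝ) + β)))) := hfinal.symm

end ThetaKAux
namespace ThetaKAux

lemma final_conv {d : ℕ} {β ν ζ : ℝ} (hβ : 0 < β) (hν0 : 0 ≤ ν) (hζ0 : 0 ≤ ζ) (hζ1 : ζ ≤ 1)
    {M r u cc : ℝ} (hM : 0 < M) (hr : 0 ≤ r) (hu0 : 0 < u) (hu1 : u ≤ 1) (hcc : 0 ≤ cc) :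
    cc * (u ^ ν * (M ^ β * (M + r) ^ (-((d:ℝ) + β)))) ≤
      (cc + 1) * u ^ ((1 - ζ) * ν) * M⁻¹ ^ (d:ℝ) / (1 + M⁻¹ * r) ^ ((d:ℝ) + β / 2) := by
  have hMr : 0 < M + r := by linarith
  have main : cc * (u ^ ν * (M ^ β * (M + r) ^ (-((d:ℝ) + β)))) ≤
      (cc + 1) * (u ^ ((1 - ζ) * ν) * (M ^ (β / 2) * (M + r) ^ (-((d:ℝ) + β / 2)))) := by
    have i1 : u ^ ν ≤ u ^ ((1 - ζ) * ν) :=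
      Real.rpow_le_rpow_of_exponent_ge hu0 hu1 (by nlinarith)
    have i2 : M ^ β * (M + r) ^ (-((d:ℝ) + β)) ≤
        M ^ (β / 2) * (M + r) ^ (-((d:ℝ) + β / 2)) := by
      have j1 : M ^ β = M ^ (β / 2) * M ^ (β / 2) := by
        rw [← Real.rpow_add hM]
        congr 1
        ring
      have j2 : (M + r) ^ (-((d:ℝ) + β)) =
          (M + r) ^ (-((d:ℝ) + β / 2)) * (M + r) ^ (-(β / 2)) := by
        rw [← Real.rpow_add hMr]
        congr 1
        ring
      have j3 : M ^ (β / 2) * (M + r) ^ (-(β / 2)) ≤ 1 := by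
        have j3a : (M + r) ^ (-(β / 2)) ≤ M ^ (-(β / 2)) :=
          Real.rpow_le_rpow_of_nonpos hM (by linarith) (by linarith)
        calc M ^ (β / 2) * (M + r) ^ (-(β / 2)) ≤ M ^ (β / 2) * M ^ (-(β / 2)) :=
              mul_le_mul_of_nonneg_left j3a (Real.rpow_nonneg hM.le _)
          _ = 1 := by rw [← Real.rpow_add hM]; simp
      calc M ^ β * (M + r) ^ (-((d:ℝ) + β))
          = (M ^ (β / 2) * (M + r) ^ (-(β / 2))) *
              (M ^ (β / 2) * (M + r) ^ (-((d:ℝ) + β / 2))) := by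
            rw [j1, j2]; ring
        _ ≤ 1 * (M ^ (β / 2) * (M + r) ^ (-((d:ℝ) + β / 2))) :=
            mul_le_mul_of_nonneg_right j3 (by positivity)
        _ = M ^ (β / 2) * (M + r) ^ (-((d:ℝ) + β / 2)) := one_mul _
    calc cc * (u ^ ν * (M ^ β * (M + r) ^ (-((d:ℝ) + β))))
        ≤ cc * (u ^ ((1 - ζ) * ν) * (M ^ (β / 2) * (M + r) ^ (-((d:ℝ) + β / 2)))) := by
          apply mul_le_mul_of_nonneg_left
            (mul_le_mul i1 i2 (by positivity) (Real.rpow_nonneg hu0.le _)) hcc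
      _ ≤ (cc + 1) * (u ^ ((1 - ζ) * ν) * (M ^ (β / 2) * (M + r) ^ (-((d:ℝ) + β / 2)))) := by
          apply mul_le_mul_of_nonneg_right (by linarith) (by positivity)
  have disp : (cc + 1) * u ^ ((1 - ζ) * ν) * M⁻¹ ^ (d:ℝ) / (1 + M⁻¹ * r) ^ ((d:ℝ) + β / 2)
      = (cc + 1) * (u ^ ((1 - ζ) * ν) * (M ^ (β / 2) * (M + r) ^ (-((d:ℝ) + β / 2)))) := by
    have e1 : 1 + M⁻¹ * r = M⁻¹ * (M + r) := by field_simp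
    have e2 : (1 + M⁻¹ * r) ^ ((d:ℝ) + β / 2) =
        M ^ (-((d:ℝ) + β / 2)) * (M + r) ^ ((d:ℝ) + β / 2) := by
      rw [e1, Real.mul_rpow (by positivity) hMr.le, Real.inv_rpow hM.le,
        ← Real.rpow_neg hM.le]
    have e3 : M⁻¹ ^ (d:ℝ) = M ^ (-(d:ℝ)) := by
      rw [Real.inv_rpow hM.le, ← Real.rpow_neg hM.le]
    have e4 : (M ^ (-((d:ℝ) + β / 2)))⁻¹ = M ^ ((d:ℝ) + β / 2) := by
      rw [← Real.rpow_neg hM.le, neg_neg]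
    have e5 : ((M + r) ^ ((d:ℝ) + β / 2))⁻¹ = (M + r) ^ (-((d:ℝ) + β / 2)) :=
      (Real.rpow_neg hMr.le _).symm
    rw [e2, e3, div_eq_mul_inv, mul_inv, e4, e5]
    rw [show (cc + 1) * u ^ ((1 - ζ) * ν) * M ^ (-(d:ℝ)) *
          (M ^ ((d:ℝ) + β / 2) * (M + r) ^ (-((d:ℝ) + β / 2))) =
        (cc + 1) * (u ^ ((1 - ζ) * ν) *
          ((M ^ (-(d:ℝ)) * M ^ ((d:ℝ) + β / 2)) * (M + r) ^ (-((d:ℝ) + β / 2)))) by ring]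
    rw [← Real.rpow_add hM, show -(d:ℝ) + ((d:ℝ) + β / 2) = β / 2 by ring]
  rw [disp]
  exact main

end ThetaKAux
/-- The kernel estimate for `Λ^θ_{t,s}(y,w) = ∫ θ_t(y,z) k(s,z,w) dz`,
uniform over `θ ∈ H_{γ,β}`, where `ν = min{γ,β}/2` and `ζ = (d + β/2)/(d + β)`. -/
theorem theta_k_kernel_estimate :
    ∀ d : ℕ, 1 ≤ d →
    ∀ β γ : ℝ, 0 < β → β ≤ 1 → 0 < γ → γ ≤ 1 →
    ∀ Ck : ℝ, 0 < Ck →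
    ∃ C : ℝ, 0 < C ∧
      ∀ k : ℝ → Euc d → Euc d → ℝ,
        (∀ t > (0:ℝ), MemHol d γ β
          (fun x y => Ck⁻¹ * (t ^ d * k t (t • x) (t • y)))) →
        (∀ s > (0:ℝ), ∀ w : Euc d, ∫ z, k s z w = 0) →
        ∀ θ : Euc d → Euc d → ℝ, MemHol d γ β θ →
        ∀ t > (0:ℝ), ∀ s > (0:ℝ), ∀ y w : Euc d,
          |∫ z, ((t ^ d)⁻¹ * θ (t⁻¹ • y) (t⁻¹ • z)) * k s z w| ≤
            C * min (s / t) (t / s) ^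
                ((1 - ((d : ℝ) + β / 2) / ((d : ℝ) + β)) * (min γ β / 2)) *
              min t⁻¹ s⁻¹ ^ (d : ℝ) /
              (1 + min t⁻¹ s⁻¹ * dist y w) ^ ((d : ℝ) + β / 2) := by
  intro d _hd β γ hβ hβ1 hγ hγ1 Ck hCk
  have hC0 := ThetaKAux.C0_nonneg d β γ
  refine ⟨Ck * ThetaKAux.C0 d β γ + 1, by positivity, ?_⟩
  intro k hk hk0 θ hθ t ht s hs y w
  have hd0 : (0:ℝ) ≤ (d:ℝ) := Nat.cast_nonneg d
  have hζ0 : 0 ≤ ((d:ℝ) + β / 2) / ((d:ℝ) + β) := by positivity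
  have hζ1 : ((d:ℝ) + β / 2) / ((d:ℝ) + β) ≤ 1 := by
    rw [div_le_one (by linarith)]
    linarith
  have hν0 : (0:ℝ) ≤ min γ β / 2 := by positivity
  have hCk' : Ck ≠ 0 := ne_of_gt hCk
  have hsd : ((s:ℝ) ^ (d:ℕ)) ≠ 0 := pow_ne_zero _ hs.ne'
  have hκ := hk s hs
  have hkrep : ∀ z w' : Euc d,
      k s z w' = Ck * (((s:ℝ) ^ (d:ℕ))⁻¹ *
        (Ck⁻¹ * (s ^ d * k s (s • (s⁻¹ • z)) (s • (s⁻¹ • w'))))) := by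
    intro z w'
    rw [smul_inv_smul₀ hs.ne', smul_inv_smul₀ hs.ne']
    field_simp
  have hkSize : ∀ z w' : Euc d, |k s z w'| ≤
      Ck * (s ^ β * (s + dist z w') ^ (-((d:ℝ) + β))) := by
    intro z w'
    rw [hkrep z w', abs_mul, abs_of_pos hCk]
    exact mul_le_mul_of_nonneg_left (ThetaKAux.memHol_size hκ hs z w') hCk.le
  have hkReg : ∀ z y' w' : Euc d, 2 * dist z y' ≤ s + dist y' w' →
      |k s z w' - k s y' w'| ≤
        Ck * (dist z y' ^ γ * (s ^ β * (s + dist y' w') ^ (-((d:ℝ) + β + γ)))) := by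
    intro z y' w' hcond
    rw [hkrep z w', hkrep y' w', ← mul_sub, abs_mul, abs_of_pos hCk]
    exact mul_le_mul_of_nonneg_left
      (ThetaKAux.memHol_reg_left hγ.le hκ hs y' z w' hcond) hCk.le
  have hkCont : Continuous fun z : Euc d => k s z w := by
    have hrep : (fun z : Euc d => k s z w) =
        fun z => Ck * (((s:ℝ) ^ (d:ℕ))⁻¹ *
          (Ck⁻¹ * (s ^ d * k s (s • (s⁻¹ • z)) (s • (s⁻¹ • w))))) :=
      funext fun z => hkrep z w
    rw [hrep]
    apply continuous_const.mul
    apply continuous_const.mul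
    exact (ThetaKAux.memHol_cont_left hβ hγ hκ (s⁻¹ • w)).comp (continuous_const_smul s⁻¹)
  have hθCont : Continuous fun z : Euc d => ((t:ℝ) ^ (d:ℕ))⁻¹ * θ (t⁻¹ • y) (t⁻¹ • z) :=
    continuous_const.mul
      ((ThetaKAux.memHol_cont_right hβ hγ hθ (t⁻¹ • y)).comp (continuous_const_smul t⁻¹))
  have hθ0 : (∫ z : Euc d, ((t:ℝ) ^ (d:ℕ))⁻¹ * θ (t⁻¹ • y) (t⁻¹ • z)) = 0 := by
    rw [MeasureTheory.integral_const_mul]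
    have hsc : (∫ z : Euc d, θ (t⁻¹ • y) (t⁻¹ • z)) =
        (t:ℝ) ^ (Module.finrank ℝ (Euc d)) • ∫ z : Euc d, θ (t⁻¹ • y) z :=
      MeasureTheory.Measure.integral_comp_inv_smul_of_nonneg volume
        (fun z => θ (t⁻¹ • y) z) ht.le
    rw [hsc, hθ.2.2.2 (t⁻¹ • y), smul_zero, mul_zero]
  have hθSize : ∀ z : Euc d, |((t:ℝ) ^ (d:ℕ))⁻¹ * θ (t⁻¹ • y) (t⁻¹ • z)| ≤
      1 * (t ^ β * (t + dist z y) ^ (-((d:ℝ) + β))) := by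
    intro z
    rw [one_mul, dist_comm z y]
    exact ThetaKAux.memHol_size hθ ht y z
  rcases le_total t s with hts | hst
  · -- case t ≤ s
    have hGr : ∀ z : Euc d, 2 * dist z y ≤ s + dist y w →
        |k s z w - k s y w| ≤
          Ck * (dist z y ^ γ * (s ^ β * (s + dist y w) ^ (-((d:ℝ) + β + γ)))) :=
      fun z hcond => hkReg z y w hcond
    have hcore := ThetaKAux.core hβ hβ1 hγ hγ1 y w
      (σ := t) (M := s) (A := 1) (B := Ck)
      (F := fun z : Euc d => ((t:ℝ) ^ (d:ℕ))⁻¹ * θ (t⁻¹ • y) (t⁻¹ • z))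
      (G := fun z : Euc d => k s z w)
      ht hts one_pos hCk hθCont hkCont hθ0 hθSize (fun z => hkSize z w) hGr
    have hmins : min (s / t) (t / s) = t / s := by
      apply min_eq_right
      rw [div_le_div_iff₀ hs ht]
      nlinarith
    have hminv : min t⁻¹ s⁻¹ = s⁻¹ := min_eq_right (by
      apply inv_anti₀ ht hts)
    rw [hmins, hminv]
    calc |∫ z, (((t:ℝ) ^ (d:ℕ))⁻¹ * θ (t⁻¹ • y) (t⁻¹ • z)) * k s z w|
        ≤ 1 * Ck * ThetaKAux.C0 d β γ *
            ((t / s) ^ (min γ β / 2) *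
              (s ^ β * (s + dist y w) ^ (-((d:ℝ) + β)))) := hcore
      _ = (Ck * ThetaKAux.C0 d β γ) *
            ((t / s) ^ (min γ β / 2) *
              (s ^ β * (s + dist y w) ^ (-((d:ℝ) + β)))) := by ring
      _ ≤ (Ck * ThetaKAux.C0 d β γ + 1) *
            (t / s) ^ ((1 - ((d:ℝ) + β / 2) / ((d:ℝ) + β)) * (min γ β / 2)) *
            s⁻¹ ^ (d:ℝ) / (1 + s⁻¹ * dist y w) ^ ((d:ℝ) + β / 2) :=
          ThetaKAux.final_conv hβ hν0 hζ0 hζ1 hs dist_nonneg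
            (div_pos ht hs) ((div_le_one hs).2 hts) (by positivity)
  · -- case s ≤ t
    have hcomm : (∫ z, (((t:ℝ) ^ (d:ℕ))⁻¹ * θ (t⁻¹ • y) (t⁻¹ • z)) * k s z w) =
        ∫ z, k s z w * (((t:ℝ) ^ (d:ℕ))⁻¹ * θ (t⁻¹ • y) (t⁻¹ • z)) := by
      congr 1
      funext z
      ring
    have hGb : ∀ z : Euc d, |((t:ℝ) ^ (d:ℕ))⁻¹ * θ (t⁻¹ • y) (t⁻¹ • z)| ≤
        1 * (t ^ β * (t + dist z y) ^ (-((d:ℝ) + β))) := hθSize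
    have hGr : ∀ z : Euc d, 2 * dist z w ≤ t + dist w y →
        |((t:ℝ) ^ (d:ℕ))⁻¹ * θ (t⁻¹ • y) (t⁻¹ • z) -
            ((t:ℝ) ^ (d:ℕ))⁻¹ * θ (t⁻¹ • y) (t⁻¹ • w)| ≤
          1 * (dist z w ^ γ * (t ^ β * (t + dist w y) ^ (-((d:ℝ) + β + γ)))) := by
      intro z hcond
      rw [one_mul, dist_comm w y]
      rw [dist_comm w y] at hcond
      exact ThetaKAux.memHol_reg_right hγ.le hθ ht y w z hcond
    have hcore := ThetaKAux.core hβ hβ1 hγ hγ1 w y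
      (σ := s) (M := t) (A := Ck) (B := 1)
      (F := fun z : Euc d => k s z w)
      (G := fun z : Euc d => ((t:ℝ) ^ (d:ℕ))⁻¹ * θ (t⁻¹ • y) (t⁻¹ • z))
      hs hst hCk one_pos hkCont hθCont (hk0 s hs w) (fun z => hkSize z w) hGb hGr
    have hmins : min (s / t) (t / s) = s / t := by
      apply min_eq_left
      rw [div_le_div_iff₀ ht hs]
      nlinarith
    have hminv : min t⁻¹ s⁻¹ = t⁻¹ := min_eq_left (by
      apply inv_anti₀ hs hst)
    rw [hmins, hminv, hcomm]
    calc |∫ z, k s z w * (((t:ℝ) ^ (d:ℕ))⁻¹ * θ (t⁻¹ • y) (t⁻¹ • z))|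
        ≤ Ck * 1 * ThetaKAux.C0 d β γ *
            ((s / t) ^ (min γ β / 2) *
              (t ^ β * (t + dist w y) ^ (-((d:ℝ) + β)))) := hcore
      _ = (Ck * ThetaKAux.C0 d β γ) *
            ((s / t) ^ (min γ β / 2) *
              (t ^ β * (t + dist y w) ^ (-((d:ℝ) + β)))) := by
          rw [dist_comm w y]
          ring
      _ ≤ (Ck * ThetaKAux.C0 d β γ + 1) *
            (s / t) ^ ((1 - ((d:ℝ) + β / 2) / ((d:ℝ) + β)) * (min γ β / 2)) *
            t⁻¹ ^ (d:ℝ) / (1 + t⁻¹ * dist y w) ^ ((d:ℝ) + β / 2) :=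
          ThetaKAux.final_conv hβ hν0 hζ0 hζ1 ht dist_nonneg
            (div_pos hs ht) ((div_le_one ht).2 hst) (by positivity)
end
end
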